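/- arXiv:math/0501438 — 7 statements merged into one kernel-verified Lean document; each statement's English description precedes it below -/
import Mathlib

section
/- Every lattice L with more than one element has a proper congruence-preserving extension; that is, there exist a lattice K and a lattice embedding f : L → K which is not surjective such that for every congruence Θ of L there is exactly one congruence Φ of K whose restriction along f equals Θ (i.e., Φ(f x, f y) ↔ Θ(x, y) for all x, y ∈ L). -/
universe u

/-- A *congruence* of a lattice: an equivalence relation compatible with
joins and meets. -/
def IsLatticeCongruence {α : Type*} [Lattice α] (Θ : α → α → Prop) : Prop :=
  Equivalence Θ ∧
    ∀ a b c d : α, Θ a b → Θ c d → Θ (a ⊔ c) (b ⊔ d) ∧ Θ (a ⊓ c) (b ⊓ d)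

namespace CPE
variable {L : Type u} [Lattice L]

/-- closure to a balanced triple -/
def pcl (t : L × L × L) : L × L × L :=
  ((t.1 ⊔ t.2.1) ⊓ (t.1 ⊔ t.2.2), (t.2.1 ⊔ t.1) ⊓ (t.2.1 ⊔ t.2.2),
    (t.2.2 ⊔ t.1) ⊓ (t.2.2 ⊔ t.2.1))

def Bal (t : L × L × L) : Prop := pcl t = t

lemma le_pcl (t : L × L × L) : t ≤ pcl t := by
  refine ⟨le_inf le_sup_left le_sup_left, le_inf le_sup_left le_sup_left,
    le_inf le_sup_left le_sup_left⟩

lemma pcl_mono : Monotone (pcl (L := L)) := by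
  intro s t h
  obtain ⟨h1, h2, h3⟩ := h
  exact ⟨inf_le_inf (sup_le_sup h1 h2) (sup_le_sup h1 h3),
    inf_le_inf (sup_le_sup h2 h1) (sup_le_sup h2 h3),
    inf_le_inf (sup_le_sup h3 h1) (sup_le_sup h3 h2)⟩

lemma bal_pcl (t : L × L × L) : Bal (pcl t) := by
  refine le_antisymm ?_ (le_pcl _)
  refine ⟨?_, ?_, ?_⟩
  · exact inf_le_inf
      (sup_le inf_le_left (inf_le_left.trans (le_of_eq (sup_comm _ _))))
      (sup_le inf_le_right (inf_le_left.trans (le_of_eq (sup_comm _ _))))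
  · exact inf_le_inf
      (sup_le inf_le_left (inf_le_left.trans (le_of_eq (sup_comm _ _))))
      (sup_le inf_le_right (inf_le_right.trans (le_of_eq (sup_comm _ _))))
  · exact inf_le_inf
      (sup_le inf_le_left (inf_le_right.trans (le_of_eq (sup_comm _ _))))
      (sup_le inf_le_right (inf_le_right.trans (le_of_eq (sup_comm _ _))))

lemma bal_inf {s t : L × L × L} (hs : Bal s) (ht : Bal t) : Bal (s ⊓ t) := by
  refine le_antisymm ?_ (le_pcl _)
  calc pcl (s ⊓ t) ≤ pcl s ⊓ pcl t :=
        le_inf (pcl_mono inf_le_left) (pcl_mono inf_le_right)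
    _ = s ⊓ t := by rw [hs, ht]

lemma bal_mk1 (x y : L) : Bal (x, y, x ⊓ y) := by
  unfold Bal pcl
  refine Prod.ext ?_ (Prod.ext ?_ ?_) <;> simp

lemma bal_mk3 (x y : L) : Bal (x ⊓ y, x, y) := by
  unfold Bal pcl
  refine Prod.ext ?_ (Prod.ext ?_ ?_) <;> simp

/-- The lattice of balanced triples. -/
abbrev Bal3 (L : Type u) [Lattice L] : Type u := {t : L × L × L // Bal t}

instance : PartialOrder (Bal3 L) := Subtype.partialOrder _

lemma Bal3.le_def {s t : Bal3 L} : s ≤ t ↔ s.val ≤ t.val := Iff.rfl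

instance : Lattice (Bal3 L) where
  sup s t := ⟨pcl (s.val ⊔ t.val), bal_pcl _⟩
  le_sup_left s t := (le_sup_left (b := t.val)).trans (le_pcl _)
  le_sup_right s t := (le_sup_right (a := s.val)).trans (le_pcl _)
  sup_le s t r h1 h2 := by
    show pcl (s.val ⊔ t.val) ≤ r.val
    calc pcl (s.val ⊔ t.val) ≤ pcl r.val := pcl_mono (sup_le h1 h2)
      _ = r.val := r.2
  inf s t := ⟨s.val ⊓ t.val, bal_inf s.2 t.2⟩
  inf_le_left s t := inf_le_left (b := t.val)
  inf_le_right s t := inf_le_right (a := s.val)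
  le_inf s t r h1 h2 := le_inf (α := L × L × L) h1 h2

lemma Bal3.sup_val (s t : Bal3 L) : (s ⊔ t).val = pcl (s.val ⊔ t.val) := rfl
lemma Bal3.inf_val (s t : Bal3 L) : (s ⊓ t).val = s.val ⊓ t.val := rfl

lemma pcl_mk1 {u b v : L} (h1 : v ≤ u) (h2 : v ≤ b) :
    pcl (u, b, v) = (u, b, u ⊓ b) := by
  unfold pcl
  refine Prod.ext ?_ (Prod.ext ?_ ?_) <;> simp only
  · rw [sup_eq_left.2 h1]; simp
  · rw [sup_eq_left.2 h2]; simp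
  · rw [sup_eq_right.2 h1, sup_eq_right.2 h2]

lemma pcl_mk2 {u b v : L} (h1 : v ≤ u) (h2 : v ≤ b) :
    pcl (u, v, b) = (u, u ⊓ b, b) := by
  unfold pcl
  refine Prod.ext ?_ (Prod.ext ?_ ?_) <;> simp only
  · rw [sup_eq_left.2 h1]; simp
  · rw [sup_eq_right.2 h1, sup_eq_right.2 h2]
  · rw [sup_eq_left.2 h2]; simp

lemma pcl_mk3 {u b v : L} (h1 : v ≤ u) (h2 : v ≤ b) :
    pcl (v, u, b) = (u ⊓ b, u, b) := by
  unfold pcl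
  refine Prod.ext ?_ (Prod.ext ?_ ?_) <;> simp only
  · rw [sup_eq_right.2 h1, sup_eq_right.2 h2]
  · rw [sup_eq_left.2 h1]; simp
  · rw [sup_eq_left.2 h2]; simp

lemma bal_mk1' {x y z : L} (h : x ⊓ y = z) : Bal (x, y, z) := h ▸ bal_mk1 x y
lemma bal_mk3' {x y z : L} (h : y ⊓ z = x) : Bal (x, y, z) := h ▸ bal_mk3 y z

/-- The embedding x ↦ (x, a, x ⊓ a). -/
def emb (a x : L) : Bal3 L := ⟨(x, a, x ⊓ a), bal_mk1 x a⟩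

lemma emb_inj (a : L) : Function.Injective (emb (L := L) a) := by
  intro x y h
  have := congrArg (fun t : Bal3 L => t.val.1) h
  exact this

lemma emb_sup (a x y : L) : emb a (x ⊔ y) = emb a x ⊔ emb a y := by
  apply Subtype.ext
  show (x ⊔ y, a, (x ⊔ y) ⊓ a) = pcl ((x, a, x ⊓ a) ⊔ (y, a, y ⊓ a))
  have h1 : (x ⊓ a) ⊔ (y ⊓ a) ≤ x ⊔ y := sup_le (inf_le_left.trans le_sup_left)
    (inf_le_left.trans le_sup_right)
  have h2 : (x ⊓ a) ⊔ (y ⊓ a) ≤ a := sup_le inf_le_right inf_le_right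
  rw [Prod.mk_sup_mk, Prod.mk_sup_mk, sup_idem, pcl_mk1 h1 h2]

lemma emb_inf (a x y : L) : emb a (x ⊓ y) = emb a x ⊓ emb a y := by
  apply Subtype.ext
  show (x ⊓ y, a, (x ⊓ y) ⊓ a) = ((x, a, x ⊓ a) : L × L × L) ⊓ (y, a, y ⊓ a)
  simp only [Prod.mk_inf_mk, inf_idem]
  refine Prod.ext rfl (Prod.ext rfl ?_)
  show (x ⊓ y) ⊓ a = (x ⊓ a) ⊓ (y ⊓ a)
  rw [inf_inf_distrib_right]

section Theta
variable {Θ : L → L → Prop} (hΘ : IsLatticeCongruence Θ)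
include hΘ

/-- componentwise congruence on triples -/
def Theta3 (Θ : L → L → Prop) (p q : L × L × L) : Prop :=
  Θ p.1 q.1 ∧ Θ p.2.1 q.2.1 ∧ Θ p.2.2 q.2.2

lemma theta3_refl (p : L × L × L) : Theta3 Θ p p :=
  ⟨hΘ.1.refl _, hΘ.1.refl _, hΘ.1.refl _⟩

lemma theta3_symm {p q} (h : Theta3 Θ p q) : Theta3 Θ q p :=
  ⟨hΘ.1.symm h.1, hΘ.1.symm h.2.1, hΘ.1.symm h.2.2⟩

lemma theta3_trans {p q r} (h : Theta3 Θ p q) (h' : Theta3 Θ q r) : Theta3 Θ p r :=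
  ⟨hΘ.1.trans h.1 h'.1, hΘ.1.trans h.2.1 h'.2.1, hΘ.1.trans h.2.2 h'.2.2⟩

lemma theta3_sup {p q p' q'} (h : Theta3 Θ p q) (h' : Theta3 Θ p' q') :
    Theta3 Θ (p ⊔ p') (q ⊔ q') :=
  ⟨(hΘ.2 _ _ _ _ h.1 h'.1).1, (hΘ.2 _ _ _ _ h.2.1 h'.2.1).1,
    (hΘ.2 _ _ _ _ h.2.2 h'.2.2).1⟩

lemma theta3_inf {p q p' q'} (h : Theta3 Θ p q) (h' : Theta3 Θ p' q') :
    Theta3 Θ (p ⊓ p') (q ⊓ q') :=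
  ⟨(hΘ.2 _ _ _ _ h.1 h'.1).2, (hΘ.2 _ _ _ _ h.2.1 h'.2.1).2,
    (hΘ.2 _ _ _ _ h.2.2 h'.2.2).2⟩

lemma theta3_pcl {p q} (h : Theta3 Θ p q) : Theta3 Θ (pcl p) (pcl q) := by
  obtain ⟨h1, h2, h3⟩ := h
  exact ⟨(hΘ.2 _ _ _ _ (hΘ.2 _ _ _ _ h1 h2).1 (hΘ.2 _ _ _ _ h1 h3).1).2,
    (hΘ.2 _ _ _ _ (hΘ.2 _ _ _ _ h2 h1).1 (hΘ.2 _ _ _ _ h2 h3).1).2,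
    (hΘ.2 _ _ _ _ (hΘ.2 _ _ _ _ h3 h1).1 (hΘ.2 _ _ _ _ h3 h2).1).2⟩

/-- the canonical extension of a congruence to `Bal3 L` -/
lemma extension_isCongruence :
    IsLatticeCongruence (fun s t : Bal3 L => Theta3 Θ s.val t.val) := by
  constructor
  · exact ⟨fun s => theta3_refl hΘ _, fun h => theta3_symm hΘ h,
      fun h h' => theta3_trans hΘ h h'⟩
  · intro s t r w h h'
    exact ⟨theta3_pcl hΘ (theta3_sup hΘ h h'), theta3_inf hΘ h h'⟩

lemma extension_restricts (a : L) (x y : L) :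
    Theta3 Θ (emb a x).val (emb a y).val ↔ Θ x y := by
  constructor
  · exact fun h => h.1
  · intro h
    exact ⟨h, hΘ.1.refl a, (hΘ.2 _ _ _ _ h (hΘ.1.refl a)).2⟩

end Theta

lemma bal_eq1 {x y z : L} (h : Bal (x, y, z)) : (x ⊔ y) ⊓ (x ⊔ z) = x :=
  congrArg Prod.fst h
lemma bal_eq2 {x y z : L} (h : Bal (x, y, z)) : (y ⊔ x) ⊓ (y ⊔ z) = y :=
  congrArg (fun t => t.2.1) h
lemma bal_eq3 {x y z : L} (h : Bal (x, y, z)) : (z ⊔ x) ⊓ (z ⊔ y) = z :=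
  congrArg (fun t => t.2.2) h

/-- basic balanced triples with two coordinates equal to a lower bound -/
def W (o w : L) (h : o ≤ w) : Bal3 L := ⟨(w, o, o), bal_mk1' (inf_eq_right.2 h)⟩
def W2 (o w : L) (h : o ≤ w) : Bal3 L := ⟨(o, w, o), bal_mk1' (inf_eq_left.2 h)⟩
def W3 (o w : L) (h : o ≤ w) : Bal3 L := ⟨(o, o, w), bal_mk3' (inf_eq_left.2 h)⟩

section Transfers
variable {o i a w : L}

lemma eqA (hoa : o ≤ a) (how : o ≤ w) : W o w how ⊔ W2 o a hoa = emb a w := by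
  apply Subtype.ext
  show pcl ((w, o, o) ⊔ (o, a, o)) = (w, a, w ⊓ a)
  rw [Prod.mk_sup_mk, Prod.mk_sup_mk, sup_eq_left.2 how, sup_eq_right.2 hoa,
    sup_idem, pcl_mk1 how hoa]

lemma eqB (hoi : o ≤ i) (how : o ≤ w) (hwi : w ≤ i) :
    (W2 o w how ⊔ W3 o i hoi) ⊓ W o i hoi = W o w how := by
  apply Subtype.ext
  show pcl ((o, w, o) ⊔ (o, o, i)) ⊓ (i, o, o) = (w, o, o)
  rw [Prod.mk_sup_mk, Prod.mk_sup_mk, sup_idem, sup_eq_left.2 how,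
    sup_eq_right.2 hoi, pcl_mk3 how hoi, inf_eq_left.2 hwi,
    Prod.mk_inf_mk, Prod.mk_inf_mk, inf_eq_left.2 hwi, inf_eq_right.2 hoi,
    inf_eq_right.2 how]

lemma eqC (hoi : o ≤ i) (how : o ≤ w) (hwi : w ≤ i) :
    (W3 o w how ⊔ W2 o i hoi) ⊓ W o i hoi = W o w how := by
  apply Subtype.ext
  show pcl ((o, o, w) ⊔ (o, i, o)) ⊓ (i, o, o) = (w, o, o)
  rw [Prod.mk_sup_mk, Prod.mk_sup_mk, sup_idem, sup_eq_right.2 hoi,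
    sup_eq_left.2 how, pcl_mk3 hoi how, inf_comm i w, inf_eq_left.2 hwi,
    Prod.mk_inf_mk, Prod.mk_inf_mk, inf_eq_left.2 hwi, inf_eq_right.2 hoi,
    inf_eq_right.2 how]

lemma eqD (hoi : o ≤ i) (how : o ≤ w) (hwi : w ≤ i) :
    (W o w how ⊔ W3 o i hoi) ⊓ W2 o i hoi = W2 o w how := by
  apply Subtype.ext
  show pcl ((w, o, o) ⊔ (o, o, i)) ⊓ (o, i, o) = (o, w, o)
  rw [Prod.mk_sup_mk, Prod.mk_sup_mk, sup_eq_left.2 how, sup_idem,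
    sup_eq_right.2 hoi, pcl_mk2 how hoi, inf_eq_left.2 hwi,
    Prod.mk_inf_mk, Prod.mk_inf_mk, inf_eq_right.2 how, inf_eq_left.2 hwi,
    inf_eq_right.2 hoi]

lemma eqE (hoi : o ≤ i) (how : o ≤ w) (hwi : w ≤ i) :
    (W o w how ⊔ W2 o i hoi) ⊓ W3 o i hoi = W3 o w how := by
  apply Subtype.ext
  show pcl ((w, o, o) ⊔ (o, i, o)) ⊓ (o, o, i) = (o, o, w)
  rw [Prod.mk_sup_mk, Prod.mk_sup_mk, sup_eq_left.2 how, sup_eq_right.2 hoi,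
    sup_idem, pcl_mk1 how hoi, inf_comm w i, inf_eq_right.2 hwi,
    Prod.mk_inf_mk, Prod.mk_inf_mk, inf_eq_right.2 how, inf_eq_right.2 hoi,
    inf_eq_left.2 hwi]

end Transfers

lemma pcl_bal {x y z : L} (h : Bal (x, y, z)) :
    pcl (x, y, (x ⊓ y) ⊔ z) = (x, y, z) := by
  unfold pcl
  refine Prod.ext ?_ (Prod.ext ?_ ?_) <;> simp only
  · rw [← sup_assoc, sup_inf_self, bal_eq1 h]
  · rw [← sup_assoc, inf_comm x y, sup_inf_self, bal_eq2 h]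
  · rw [sup_right_comm (x ⊓ y) z x,
      sup_eq_right.2 (inf_le_left : x ⊓ y ≤ x),
      sup_right_comm (x ⊓ y) z y,
      sup_eq_right.2 (inf_le_right : x ⊓ y ≤ y),
      sup_comm x z, sup_comm y z, bal_eq3 h]

lemma eqM {o x y z : L} (h : Bal (x, y, z)) (hx : o ≤ x) (hy : o ≤ y)
    (hz : o ≤ z) : (W o x hx ⊔ W2 o y hy) ⊔ W3 o z hz = ⟨(x, y, z), h⟩ := by
  have h1 : W o x hx ⊔ W2 o y hy = ⟨(x, y, x ⊓ y), bal_mk1 x y⟩ := by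
    apply Subtype.ext
    show pcl (x ⊔ o, o ⊔ y, o ⊔ o) = (x, y, x ⊓ y)
    rw [sup_eq_left.2 hx, sup_eq_right.2 hy, sup_idem, pcl_mk1 hx hy]
  rw [h1]
  apply Subtype.ext
  show pcl (x ⊔ o, y ⊔ o, (x ⊓ y) ⊔ z) = (x, y, z)
  rw [sup_eq_left.2 hx, sup_eq_left.2 hy, pcl_bal h]

lemma meet_E1 {o i x y z : L} (h : Bal (x, y, z)) (hoi : o ≤ i) (hx : x ≤ i)
    (hy : o ≤ y) (hz : o ≤ z) (hox : o ≤ x) :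
    (⟨(x, y, z), h⟩ : Bal3 L) ⊓ W o i hoi = W o x hox := by
  apply Subtype.ext
  show ((x, y, z) : L × L × L) ⊓ (i, o, o) = (x, o, o)
  rw [Prod.mk_inf_mk, Prod.mk_inf_mk, inf_eq_left.2 hx, inf_eq_right.2 hy,
    inf_eq_right.2 hz]

lemma meet_E2 {o i x y z : L} (h : Bal (x, y, z)) (hoi : o ≤ i) (hx : o ≤ x)
    (hy : y ≤ i) (hz : o ≤ z) (hoy : o ≤ y) :
    (⟨(x, y, z), h⟩ : Bal3 L) ⊓ W2 o i hoi = W2 o y hoy := by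
  apply Subtype.ext
  show ((x, y, z) : L × L × L) ⊓ (o, i, o) = (o, y, o)
  rw [Prod.mk_inf_mk, Prod.mk_inf_mk, inf_eq_right.2 hx, inf_eq_left.2 hy,
    inf_eq_right.2 hz]

lemma meet_E3 {o i x y z : L} (h : Bal (x, y, z)) (hoi : o ≤ i) (hx : o ≤ x)
    (hy : o ≤ y) (hz : z ≤ i) (hoz : o ≤ z) :
    (⟨(x, y, z), h⟩ : Bal3 L) ⊓ W3 o i hoi = W3 o z hoz := by
  apply Subtype.ext
  show ((x, y, z) : L × L × L) ⊓ (o, o, i) = (o, o, z)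
  rw [Prod.mk_inf_mk, Prod.mk_inf_mk, inf_eq_right.2 hx, inf_eq_right.2 hy,
    inf_eq_left.2 hz]

lemma emb_meet_E1 {o i a w : L} (hoi : o ≤ i) (hoa : o ≤ a) (hwi : w ≤ i)
    (how : o ≤ w) : emb a w ⊓ W o i hoi = W o w how := by
  apply Subtype.ext
  show ((w, a, w ⊓ a) : L × L × L) ⊓ (i, o, o) = (w, o, o)
  rw [Prod.mk_inf_mk, Prod.mk_inf_mk, inf_eq_left.2 hwi, inf_eq_right.2 hoa,
    inf_eq_right.2 (le_inf how hoa)]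

lemma cong_iff {a : L} {Φ : Bal3 L → Bal3 L → Prop}
    (hΦ : IsLatticeCongruence Φ) (u v : Bal3 L) :
    Φ u v ↔ Theta3 (fun x y : L => Φ (emb a x) (emb a y)) u.val v.val := by
  obtain ⟨⟨x, y, z⟩, hu⟩ := u
  obtain ⟨⟨x', y', z'⟩, hv⟩ := v
  set o := ((x ⊓ x') ⊓ ((y ⊓ y') ⊓ (z ⊓ z'))) ⊓ a with ho
  set i := ((x ⊔ x') ⊔ ((y ⊔ y') ⊔ (z ⊔ z'))) ⊔ a with hi
  have hoa : o ≤ a := inf_le_right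
  have hai : a ≤ i := le_sup_right
  have hoi : o ≤ i := hoa.trans hai
  have hox : o ≤ x := inf_le_left.trans (inf_le_left.trans inf_le_left)
  have hox' : o ≤ x' := inf_le_left.trans (inf_le_left.trans inf_le_right)
  have hoy : o ≤ y :=
    inf_le_left.trans (inf_le_right.trans (inf_le_left.trans inf_le_left))
  have hoy' : o ≤ y' :=
    inf_le_left.trans (inf_le_right.trans (inf_le_left.trans inf_le_right))
  have hoz : o ≤ z :=
    inf_le_left.trans (inf_le_right.trans (inf_le_right.trans inf_le_left))
  have hoz' : o ≤ z' :=
    inf_le_left.trans (inf_le_right.trans (inf_le_right.trans inf_le_right))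
  have hxi : x ≤ i := (le_sup_left.trans le_sup_left).trans le_sup_left
  have hxi' : x' ≤ i := (le_sup_right.trans le_sup_left).trans le_sup_left
  have hyi : y ≤ i :=
    ((le_sup_left.trans le_sup_left).trans le_sup_right).trans le_sup_left
  have hyi' : y' ≤ i :=
    ((le_sup_right.trans le_sup_left).trans le_sup_right).trans le_sup_left
  have hzi : z ≤ i :=
    ((le_sup_left.trans le_sup_right).trans le_sup_right).trans le_sup_left
  have hzi' : z' ≤ i :=
    ((le_sup_right.trans le_sup_right).trans le_sup_right).trans le_sup_left
  constructor
  · intro h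
    refine ⟨?_, ?_, ?_⟩
    · have c1 := (hΦ.2 _ _ _ _ h (hΦ.1.refl (W o i hoi))).2
      rw [meet_E1 hu hoi hxi hoy hoz hox, meet_E1 hv hoi hxi' hoy' hoz' hox']
        at c1
      have d1 := (hΦ.2 _ _ _ _ c1 (hΦ.1.refl (W2 o a hoa))).1
      rw [eqA hoa hox, eqA hoa hox'] at d1
      exact d1
    · have c2 := (hΦ.2 _ _ _ _ h (hΦ.1.refl (W2 o i hoi))).2
      rw [meet_E2 hu hoi hox hyi hoz hoy, meet_E2 hv hoi hox' hyi' hoz' hoy']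
        at c2
      have d2 := (hΦ.2 _ _ _ _ (hΦ.2 _ _ _ _ c2 (hΦ.1.refl (W3 o i hoi))).1
        (hΦ.1.refl (W o i hoi))).2
      rw [eqB hoi hoy hyi, eqB hoi hoy' hyi'] at d2
      have d3 := (hΦ.2 _ _ _ _ d2 (hΦ.1.refl (W2 o a hoa))).1
      rw [eqA hoa hoy, eqA hoa hoy'] at d3
      exact d3
    · have c3 := (hΦ.2 _ _ _ _ h (hΦ.1.refl (W3 o i hoi))).2
      rw [meet_E3 hu hoi hox hoy hzi hoz, meet_E3 hv hoi hox' hoy' hzi' hoz']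
        at c3
      have d2 := (hΦ.2 _ _ _ _ (hΦ.2 _ _ _ _ c3 (hΦ.1.refl (W2 o i hoi))).1
        (hΦ.1.refl (W o i hoi))).2
      rw [eqC hoi hoz hzi, eqC hoi hoz' hzi'] at d2
      have d3 := (hΦ.2 _ _ _ _ d2 (hΦ.1.refl (W2 o a hoa))).1
      rw [eqA hoa hoz, eqA hoa hoz'] at d3
      exact d3
  · rintro ⟨h1, h2, h3⟩
    have k1 : Φ (W o x hox) (W o x' hox') := by
      have := (hΦ.2 _ _ _ _ h1 (hΦ.1.refl (W o i hoi))).2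
      rwa [emb_meet_E1 hoi hoa hxi hox, emb_meet_E1 hoi hoa hxi' hox'] at this
    have k2y : Φ (W o y hoy) (W o y' hoy') := by
      have := (hΦ.2 _ _ _ _ h2 (hΦ.1.refl (W o i hoi))).2
      rwa [emb_meet_E1 hoi hoa hyi hoy, emb_meet_E1 hoi hoa hyi' hoy'] at this
    have k2 : Φ (W2 o y hoy) (W2 o y' hoy') := by
      have := (hΦ.2 _ _ _ _ (hΦ.2 _ _ _ _ k2y (hΦ.1.refl (W3 o i hoi))).1
        (hΦ.1.refl (W2 o i hoi))).2
      rwa [eqD hoi hoy hyi, eqD hoi hoy' hyi'] at this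
    have k3z : Φ (W o z hoz) (W o z' hoz') := by
      have := (hΦ.2 _ _ _ _ h3 (hΦ.1.refl (W o i hoi))).2
      rwa [emb_meet_E1 hoi hoa hzi hoz, emb_meet_E1 hoi hoa hzi' hoz'] at this
    have k3 : Φ (W3 o z hoz) (W3 o z' hoz') := by
      have := (hΦ.2 _ _ _ _ (hΦ.2 _ _ _ _ k3z (hΦ.1.refl (W2 o i hoi))).1
        (hΦ.1.refl (W3 o i hoi))).2
      rwa [eqE hoi hoz hzi, eqE hoi hoz' hzi'] at this
    have m := (hΦ.2 _ _ _ _ (hΦ.2 _ _ _ _ k1 k2).1 k3).1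
    rwa [eqM hu hox hoy hoz, eqM hv hox' hoy' hoz'] at m

end CPE

/-- Every lattice with more than one element has a proper congruence-preserving
extension. -/
theorem proper_congruence_preserving_extension (L : Type u) [Lattice L] [Nontrivial L] :
    ∃ (K : Type u) (_ : Lattice K) (f : L → K),
      Function.Injective f ∧
      (∀ x y : L, f (x ⊔ y) = f x ⊔ f y) ∧
      (∀ x y : L, f (x ⊓ y) = f x ⊓ f y) ∧
      ¬ Function.Surjective f ∧
      ∀ Θ : L → L → Prop, IsLatticeCongruence Θ →
        ∃! Φ : K → K → Prop,
          IsLatticeCongruence Φ ∧ ∀ x y : L, Φ (f x) (f y) ↔ Θ x y := by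
  obtain ⟨a, b, hab⟩ := exists_pair_ne L
  refine ⟨CPE.Bal3 L, inferInstance, CPE.emb a, CPE.emb_inj a,
    CPE.emb_sup a, CPE.emb_inf a, ?_, ?_⟩
  · intro hs
    obtain ⟨x, hx⟩ := hs ⟨(b, b, b), CPE.bal_mk1' (inf_idem b)⟩
    have h2 := congrArg (fun t : CPE.Bal3 L => t.val.2.1) hx
    exact hab h2
  · intro Θ hΘ
    refine ⟨fun s t => CPE.Theta3 Θ s.val t.val,
      ⟨CPE.extension_isCongruence hΘ, fun x y => CPE.extension_restricts hΘ a x y⟩,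
      ?_⟩
    intro Φ ⟨hΦ, hres⟩
    funext s t
    apply propext
    rw [CPE.cong_iff (a := a) hΦ s t]
    unfold CPE.Theta3
    simp only []
    rw [hres, hres, hres]
end

section
/- Let L be a lattice and let (x, y, z) ∈ L³ be a Boolean triple. Then x ⊓ y = y ⊓ z = z ⊓ x, and this common value equals the upper median (x ⊔ y) ⊓ (y ⊔ z) ⊓ (z ⊔ x). -/
/-- A triple `(x, y, z)` in a lattice is *Boolean* if `x = (x ⊔ y) ⊓ (x ⊔ z)`,
`y = (y ⊔ x) ⊓ (y ⊔ z)`, and `z = (z ⊔ x) ⊓ (z ⊔ y)`. -/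
def IsBoolean {L : Type*} [Lattice L] (t : L × L × L) : Prop :=
  t.1 = (t.1 ⊔ t.2.1) ⊓ (t.1 ⊔ t.2.2) ∧
  t.2.1 = (t.2.1 ⊔ t.1) ⊓ (t.2.1 ⊔ t.2.2) ∧
  t.2.2 = (t.2.2 ⊔ t.1) ⊓ (t.2.2 ⊔ t.2.1)

/-- Every Boolean triple `(x, y, z)` satisfies `x ⊓ y = y ⊓ z = z ⊓ x`, and this
common value is the upper median `(x ⊔ y) ⊓ (y ⊔ z) ⊓ (z ⊔ x)`. -/
theorem IsBoolean.inf_eq {L : Type*} [Lattice L] {x y z : L}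
    (h : IsBoolean ((x, y, z) : L × L × L)) :
    x ⊓ y = y ⊓ z ∧ y ⊓ z = z ⊓ x ∧
      x ⊓ y = (x ⊔ y) ⊓ (y ⊔ z) ⊓ (z ⊔ x) := by
  obtain ⟨hx, hy, hz⟩ := h
  simp only at hx hy hz
  have m1 : x ⊓ y = (x ⊔ y) ⊓ (y ⊔ z) ⊓ (z ⊔ x) := by
    calc x ⊓ y = ((x ⊔ y) ⊓ (x ⊔ z)) ⊓ ((y ⊔ x) ⊓ (y ⊔ z)) := by rw [← hx, ← hy]
    _ = _ := by rw [sup_comm y x, sup_comm x z]; ac_rfl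
  have m2 : y ⊓ z = (x ⊔ y) ⊓ (y ⊔ z) ⊓ (z ⊔ x) := by
    calc y ⊓ z = ((y ⊔ x) ⊓ (y ⊔ z)) ⊓ ((z ⊔ x) ⊓ (z ⊔ y)) := by rw [← hy, ← hz]
    _ = _ := by rw [sup_comm y x, sup_comm z y]; ac_rfl
  have m3 : z ⊓ x = (x ⊔ y) ⊓ (y ⊔ z) ⊓ (z ⊔ x) := by
    calc z ⊓ x = ((z ⊔ x) ⊓ (z ⊔ y)) ⊓ ((x ⊔ y) ⊓ (x ⊔ z)) := by rw [← hz, ← hx]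
    _ = _ := by rw [sup_comm z y, sup_comm x z]; ac_rfl
  exact ⟨m1.trans m2.symm, m2.trans m3.symm, m1⟩
end

section
/- Let L be a lattice and (x, y, z) ∈ L³. Then the triple ((x ⊔ y) ⊓ (x ⊔ z), (y ⊔ x) ⊓ (y ⊔ z), (z ⊔ x) ⊓ (z ⊔ y)) is a Boolean triple, it dominates (x, y, z) componentwise, and it is the smallest such Boolean triple: every Boolean triple (x₂, y₂, z₂) with x ≤ x₂, y ≤ y₂, z ≤ z₂ satisfies (x ⊔ y) ⊓ (x ⊔ z) ≤ x₂, (y ⊔ x) ⊓ (y ⊔ z) ≤ y₂, and (z ⊔ x) ⊓ (z ⊔ y) ≤ z₂. -/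
/-- For every triple `(x, y, z)`, the triple
`((x ⊔ y) ⊓ (x ⊔ z), (y ⊔ x) ⊓ (y ⊔ z), (z ⊔ x) ⊓ (z ⊔ y))` is the smallest
Boolean triple dominating `(x, y, z)` componentwise. -/
theorem smallest_boolean_closure {L : Type*} [Lattice L] (x y z : L) :
    IsBoolean (((x ⊔ y) ⊓ (x ⊔ z), (y ⊔ x) ⊓ (y ⊔ z), (z ⊔ x) ⊓ (z ⊔ y)) : L × L × L) ∧
    (x ≤ (x ⊔ y) ⊓ (x ⊔ z) ∧ y ≤ (y ⊔ x) ⊓ (y ⊔ z) ∧ z ≤ (z ⊔ x) ⊓ (z ⊔ y)) ∧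
    ∀ x₂ y₂ z₂ : L, IsBoolean ((x₂, y₂, z₂) : L × L × L) →
      x ≤ x₂ → y ≤ y₂ → z ≤ z₂ →
        (x ⊔ y) ⊓ (x ⊔ z) ≤ x₂ ∧ (y ⊔ x) ⊓ (y ⊔ z) ≤ y₂ ∧ (z ⊔ x) ⊓ (z ⊔ y) ≤ z₂ := by
  have hxA : x ≤ (x ⊔ y) ⊓ (x ⊔ z) := le_inf le_sup_left le_sup_left
  have hyB : y ≤ (y ⊔ x) ⊓ (y ⊔ z) := le_inf le_sup_left le_sup_left
  have hzC : z ≤ (z ⊔ x) ⊓ (z ⊔ y) := le_inf le_sup_left le_sup_left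
  have hAB : (x ⊔ y) ⊓ (x ⊔ z) ⊔ (y ⊔ x) ⊓ (y ⊔ z) = x ⊔ y :=
    le_antisymm (sup_le inf_le_left (inf_le_left.trans (sup_comm y x).le)) (sup_le_sup hxA hyB)
  have hAC : (x ⊔ y) ⊓ (x ⊔ z) ⊔ (z ⊔ x) ⊓ (z ⊔ y) = x ⊔ z :=
    le_antisymm (sup_le inf_le_right (inf_le_left.trans (sup_comm z x).le)) (sup_le_sup hxA hzC)
  have hBA : (y ⊔ x) ⊓ (y ⊔ z) ⊔ (x ⊔ y) ⊓ (x ⊔ z) = y ⊔ x :=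
    le_antisymm (sup_le inf_le_left (inf_le_left.trans (sup_comm x y).le)) (sup_le_sup hyB hxA)
  have hBC : (y ⊔ x) ⊓ (y ⊔ z) ⊔ (z ⊔ x) ⊓ (z ⊔ y) = y ⊔ z :=
    le_antisymm (sup_le inf_le_right (inf_le_right.trans (sup_comm z y).le)) (sup_le_sup hyB hzC)
  have hCA : (z ⊔ x) ⊓ (z ⊔ y) ⊔ (x ⊔ y) ⊓ (x ⊔ z) = z ⊔ x :=
    le_antisymm (sup_le inf_le_left (inf_le_right.trans (sup_comm x z).le)) (sup_le_sup hzC hxA)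
  have hCB : (z ⊔ x) ⊓ (z ⊔ y) ⊔ (y ⊔ x) ⊓ (y ⊔ z) = z ⊔ y :=
    le_antisymm (sup_le inf_le_right (inf_le_right.trans (sup_comm y z).le)) (sup_le_sup hzC hyB)
  refine ⟨⟨?_, ?_, ?_⟩, ⟨hxA, hyB, hzC⟩, ?_⟩
  · simp only; rw [hAB, hAC]
  · simp only; rw [hBA, hBC]
  · simp only; rw [hCA, hCB]
  · intro x₂ y₂ z₂ hb hxx hyy hzz
    obtain ⟨hx, hy, hz⟩ := hb
    simp only at hx hy hz
    refine ⟨?_, ?_, ?_⟩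
    · rw [hx]; exact inf_le_inf (sup_le_sup hxx hyy) (sup_le_sup hxx hzz)
    · rw [hy]; exact inf_le_inf (sup_le_sup hyy hxx) (sup_le_sup hyy hzz)
    · rw [hz]; exact inf_le_inf (sup_le_sup hzz hxx) (sup_le_sup hzz hyy)
end

section
/- Let L be a lattice. The set M̂(L) of Boolean triples of L, ordered componentwise, is a lattice in which the meet of two Boolean triples (x₀,y₀,z₀) and (x₁,y₁,z₁) is the componentwise meet (x₀ ⊓ x₁, y₀ ⊓ y₁, z₀ ⊓ z₁) (which is again Boolean), and the join is the Boolean closure of the componentwise join, i.e., the closure of (x₀ ⊔ x₁, y₀ ⊔ y₁, z₀ ⊔ z₁) is the least Boolean triple that is an upper bound of both. -/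
/-- The Boolean closure of a triple. -/
def bClosure {L : Type*} [Lattice L] (t : L × L × L) : L × L × L :=
  ((t.1 ⊔ t.2.1) ⊓ (t.1 ⊔ t.2.2),
   (t.2.1 ⊔ t.1) ⊓ (t.2.1 ⊔ t.2.2),
   (t.2.2 ⊔ t.1) ⊓ (t.2.2 ⊔ t.2.1))

variable {L : Type*} [Lattice L]

theorem isBoolean_of_rep (u v w : L) :
    IsBoolean ((u ⊓ v, u ⊓ w, v ⊓ w) : L × L × L) := by
  refine ⟨le_antisymm (le_inf le_sup_left le_sup_left) ?_,
          le_antisymm (le_inf le_sup_left le_sup_left) ?_,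
          le_antisymm (le_inf le_sup_left le_sup_left) ?_⟩
  · exact inf_le_inf (sup_le inf_le_left inf_le_left) (sup_le inf_le_right inf_le_left)
  · exact inf_le_inf (sup_le inf_le_left inf_le_left) (sup_le inf_le_right inf_le_right)
  · exact inf_le_inf (sup_le inf_le_left inf_le_right) (sup_le inf_le_right inf_le_right)

theorem isBoolean_iff_rep (t : L × L × L) :
    IsBoolean t ↔ ∃ u v w : L, t.1 = u ⊓ v ∧ t.2.1 = u ⊓ w ∧ t.2.2 = v ⊓ w := by
  constructor
  · rintro ⟨h1, h2, h3⟩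
    refine ⟨t.1 ⊔ t.2.1, t.1 ⊔ t.2.2, t.2.1 ⊔ t.2.2, h1, ?_, ?_⟩
    · conv_lhs => rw [h2]
      rw [sup_comm t.2.1 t.1]
    · conv_lhs => rw [h3]
      rw [sup_comm t.2.2 t.1, sup_comm t.2.2 t.2.1]
  · rintro ⟨u, v, w, h1, h2, h3⟩
    obtain ⟨a, b, c⟩ := t
    simp only at h1 h2 h3
    subst h1 h2 h3
    exact isBoolean_of_rep u v w

theorem bClosure_isBoolean (t : L × L × L) : IsBoolean (bClosure t) := by
  rw [isBoolean_iff_rep]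
  refine ⟨t.1 ⊔ t.2.1, t.1 ⊔ t.2.2, t.2.1 ⊔ t.2.2, rfl, ?_, ?_⟩
  · show (t.2.1 ⊔ t.1) ⊓ (t.2.1 ⊔ t.2.2) = _
    rw [sup_comm t.2.1 t.1]
  · show (t.2.2 ⊔ t.1) ⊓ (t.2.2 ⊔ t.2.1) = _
    rw [sup_comm t.2.2 t.1, sup_comm t.2.2 t.2.1]

theorem IsBoolean.inf {a b : L × L × L} (ha : IsBoolean a) (hb : IsBoolean b) :
    IsBoolean (a ⊓ b) := by
  rw [isBoolean_iff_rep] at ha hb ⊢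
  obtain ⟨u, v, w, h1, h2, h3⟩ := ha
  obtain ⟨u', v', w', h1', h2', h3'⟩ := hb
  refine ⟨u ⊓ u', v ⊓ v', w ⊓ w', ?_, ?_, ?_⟩
  · show a.1 ⊓ b.1 = _
    rw [h1, h1', inf_inf_inf_comm]
  · show a.2.1 ⊓ b.2.1 = _
    rw [h2, h2', inf_inf_inf_comm]
  · show a.2.2 ⊓ b.2.2 = _
    rw [h3, h3', inf_inf_inf_comm]

theorem le_bClosure (t : L × L × L) : t ≤ bClosure t :=
  ⟨le_inf le_sup_left le_sup_left, le_inf le_sup_left le_sup_left,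
   le_inf le_sup_left le_sup_left⟩

theorem bClosure_le {t c : L × L × L} (hc : IsBoolean c) (h : t ≤ c) :
    bClosure t ≤ c := by
  obtain ⟨h1, h2, h3⟩ := h
  refine ⟨?_, ?_, ?_⟩
  · rw [hc.1]; exact inf_le_inf (sup_le_sup h1 h2) (sup_le_sup h1 h3)
  · rw [hc.2.1]; exact inf_le_inf (sup_le_sup h2 h1) (sup_le_sup h2 h3)
  · rw [hc.2.2]; exact inf_le_inf (sup_le_sup h3 h1) (sup_le_sup h3 h2)

/-- The lattice `M̂(L)` of Boolean triples of `L`, ordered componentwise. -/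
def BoolTriple (L : Type*) [Lattice L] := {t : L × L × L // IsBoolean t}

instance : PartialOrder (BoolTriple L) := Subtype.partialOrder _

instance : Lattice (BoolTriple L) where
  sup a b := ⟨bClosure (a.1 ⊔ b.1), bClosure_isBoolean _⟩
  le_sup_left a b := show a.1 ≤ bClosure (a.1 ⊔ b.1) from le_trans le_sup_left (le_bClosure _)
  le_sup_right a b := show b.1 ≤ bClosure (a.1 ⊔ b.1) from le_trans le_sup_right (le_bClosure _)
  sup_le a b c hac hbc := show bClosure (a.1 ⊔ b.1) ≤ c.1 from bClosure_le c.2 (sup_le hac hbc)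
  inf a b := ⟨a.1 ⊓ b.1, a.2.inf b.2⟩
  inf_le_left a b := show a.1 ⊓ b.1 ≤ a.1 from inf_le_left
  inf_le_right a b := show a.1 ⊓ b.1 ≤ b.1 from inf_le_right
  le_inf a b c hab hac := show a.1 ≤ b.1 ⊓ c.1 from le_inf hab hac

/-- `M̂(L)`, the poset of Boolean triples ordered componentwise, is a lattice in
which meets are componentwise and the join of two Boolean triples is the Boolean
closure of their componentwise join, this closure being the least Boolean upper
bound. -/
theorem boolTriple_lattice_ops (a b : BoolTriple L) :
    IsBoolean (a.1 ⊓ b.1) ∧ (a ⊓ b).1 = a.1 ⊓ b.1 ∧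
    IsBoolean (bClosure (a.1 ⊔ b.1)) ∧ (a ⊔ b).1 = bClosure (a.1 ⊔ b.1) ∧
    IsGLB {a, b} (a ⊓ b) ∧ IsLUB {a, b} (a ⊔ b) := by
  exact ⟨a.2.inf b.2, rfl, bClosure_isBoolean _, rfl, isGLB_pair, isLUB_pair⟩
end

section
/- Let L be a lattice with a least element 0. For every x ∈ L the triple (x, 0, 0) is Boolean; for x, y ∈ L the componentwise meet of (x,0,0) and (y,0,0) is (x ⊓ y, 0, 0), and the Boolean closure of their componentwise join is (x ⊔ y, 0, 0). Consequently x ↦ (x, 0, 0) is a lattice embedding of L into the lattice M̂(L) of Boolean triples. -/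
variable {L : Type*} [Lattice L]

theorem isBoolean_bot_bot {L : Type*} [Lattice L] [OrderBot L] (x : L) :
    IsBoolean ((x, ⊥, ⊥) : L × L × L) := by
  refine ⟨by simp, by simp, by simp⟩

/-- The map `x ↦ (x, ⊥, ⊥)` from `L` into the lattice of Boolean triples. -/
def botEmbed {L : Type*} [Lattice L] [OrderBot L] (x : L) : BoolTriple L :=
  ⟨(x, ⊥, ⊥), isBoolean_bot_bot x⟩

/-- For a lattice with least element `0`, each `(x, 0, 0)` is Boolean, the
componentwise meet of `(x,0,0)` and `(y,0,0)` is `(x ⊓ y, 0, 0)`, the Boolean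
closure of their componentwise join is `(x ⊔ y, 0, 0)`, and hence `x ↦ (x,0,0)`
is a lattice embedding of `L` into `M̂(L)`. -/
theorem botEmbed_is_lattice_embedding (L : Type*) [Lattice L] [OrderBot L] :
    (∀ x : L, IsBoolean ((x, ⊥, ⊥) : L × L × L)) ∧
    (∀ x y : L, (((x, ⊥, ⊥) : L × L × L) ⊓ (y, ⊥, ⊥)) = ((x ⊓ y, ⊥, ⊥) : L × L × L)) ∧
    (∀ x y : L, bClosure (((x, ⊥, ⊥) : L × L × L) ⊔ (y, ⊥, ⊥)) = ((x ⊔ y, ⊥, ⊥) : L × L × L)) ∧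
    Function.Injective (botEmbed (L := L)) ∧
    (∀ x y : L, botEmbed (x ⊓ y) = botEmbed x ⊓ botEmbed y) ∧
    (∀ x y : L, botEmbed (x ⊔ y) = botEmbed x ⊔ botEmbed y) := by
  refine ⟨isBoolean_bot_bot, ?_, ?_, ?_, ?_, ?_⟩
  · intro x y
    simp [Prod.ext_iff]
  · intro x y
    simp [bClosure, Prod.ext_iff]
  · intro x y h
    have := congrArg (fun t : BoolTriple L => t.1.1) h
    simpa [botEmbed] using this
  · intro x y
    apply Subtype.ext
    simp [botEmbed]
    show _ = (⟨(x,⊥,⊥), _⟩ : BoolTriple L).1 ⊓ (⟨(y,⊥,⊥), _⟩ : BoolTriple L).1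
    simp [Prod.ext_iff]
  · intro x y
    apply Subtype.ext
    show _ = bClosure _
    simp [botEmbed, bClosure, Prod.ext_iff]
end

section
/- Every lattice L with more than one element has a proper congruence-preserving extensive extension; that is, there exist a lattice K and a non-surjective lattice embedding f : L → K such that (1) for every congruence Θ of L there is exactly one congruence Φ of K with Φ(f x, f y) ↔ Θ(x, y) for all x, y ∈ L, and (2) every element k ∈ K satisfies f(u) ≤ k ≤ f(v) for some u, v ∈ L (so the convex sublattice of K generated by the image of L is all of K). -/
universe u

namespace BTriple

variable {L : Type u} [Lattice L]

/-- Boolean-triple closure map on `L × L × L`. -/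
def clp (t : L × L × L) : L × L × L :=
  ((t.1 ⊔ t.2.1) ⊓ (t.1 ⊔ t.2.2), (t.2.1 ⊔ t.1) ⊓ (t.2.1 ⊔ t.2.2),
    (t.2.2 ⊔ t.1) ⊓ (t.2.2 ⊔ t.2.1))

lemma le_clp (t : L × L × L) : t ≤ clp t :=
  ⟨le_inf le_sup_left le_sup_left, le_inf le_sup_left le_sup_left,
    le_inf le_sup_left le_sup_left⟩

lemma clp_mono : Monotone (clp (L := L)) := by
  rintro ⟨x, y, z⟩ ⟨x', y', z'⟩ ⟨h1, h2, h3⟩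
  exact ⟨inf_le_inf (sup_le_sup h1 h2) (sup_le_sup h1 h3),
    inf_le_inf (sup_le_sup h2 h1) (sup_le_sup h2 h3),
    inf_le_inf (sup_le_sup h3 h1) (sup_le_sup h3 h2)⟩

/-- Boolean triples: fixed points of `clp`. -/
def BT (t : L × L × L) : Prop := clp t = t

private lemma aux {x y z a b c : L} (ha : a ≤ x ⊔ y) (hb : b ≤ x ⊔ y)
    (ha' : a ≤ x ⊔ z) (hc : c ≤ x ⊔ z) :
    (a ⊔ b) ⊓ (a ⊔ c) ≤ (x ⊔ y) ⊓ (x ⊔ z) :=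
  inf_le_inf (sup_le ha hb) (sup_le ha' hc)

lemma clp_clp_le (t : L × L × L) : clp (clp t) ≤ clp t := by
  obtain ⟨x, y, z⟩ := t
  refine ⟨?_, ?_, ?_⟩
  · exact aux inf_le_left (inf_le_left.trans (sup_comm _ _).le)
      inf_le_right (inf_le_left.trans (sup_comm _ _).le)
  · exact aux inf_le_left (inf_le_left.trans (sup_comm _ _).le)
      inf_le_right (inf_le_right.trans (sup_comm _ _).le)
  · exact aux inf_le_left (inf_le_right.trans (sup_comm _ _).le)
      inf_le_right (inf_le_right.trans (sup_comm _ _).le)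

lemma bt_clp (t : L × L × L) : BT (clp t) :=
  le_antisymm (clp_clp_le t) (le_clp _)

lemma bt_inf {s t : L × L × L} (hs : BT s) (ht : BT t) : BT (s ⊓ t) := by
  refine le_antisymm (le_inf ?_ ?_) (le_clp _)
  · exact (clp_mono inf_le_left).trans (le_of_eq hs)
  · exact (clp_mono inf_le_right).trans (le_of_eq ht)

lemma bt_diag (c : L) : BT ((c, c, c) : L × L × L) := by
  simp [BT, clp]

/-- The lattice of Boolean triples of `L`. -/
abbrev BK (L : Type u) [Lattice L] : Type u := {t : L × L × L // BT t}

instance : PartialOrder (BK L) := Subtype.partialOrder _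

instance : Lattice (BK L) where
  sup s t := ⟨clp (s.1 ⊔ t.1), bt_clp _⟩
  inf s t := ⟨s.1 ⊓ t.1, bt_inf s.2 t.2⟩
  le_sup_left s t := by
    show s.1 ≤ clp (s.1 ⊔ t.1)
    exact le_sup_left.trans (le_clp _)
  le_sup_right s t := by
    show t.1 ≤ clp (s.1 ⊔ t.1)
    exact le_sup_right.trans (le_clp _)
  sup_le s t u h1 h2 := by
    show clp (s.1 ⊔ t.1) ≤ u.1
    exact (clp_mono (sup_le h1 h2)).trans (le_of_eq u.2)
  inf_le_left s t := by
    show s.1 ⊓ t.1 ≤ s.1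
    exact inf_le_left
  inf_le_right s t := by
    show s.1 ⊓ t.1 ≤ t.1
    exact inf_le_right
  le_inf s t u h1 h2 := by
    show s.1 ≤ t.1 ⊓ u.1
    exact le_inf h1 h2

lemma sup_val (s t : BK L) : (s ⊔ t).1 = clp (s.1 ⊔ t.1) := rfl
lemma inf_val (s t : BK L) : (s ⊓ t).1 = s.1 ⊓ t.1 := rfl
lemma le_iff_val (s t : BK L) : s ≤ t ↔ s.1 ≤ t.1 := Iff.rfl

/-- The diagonal embedding. -/
def dg (c : L) : BK L := ⟨(c, c, c), bt_diag c⟩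

lemma dg_inj : Function.Injective (dg (L := L)) := by
  intro a b h
  have := congrArg (fun k : BK L => k.1.1) h
  exact this

lemma dg_sup (c d : L) : dg (c ⊔ d) = dg c ⊔ dg d := by
  apply Subtype.ext
  show (c ⊔ d, c ⊔ d, c ⊔ d) = clp ((c, c, c) ⊔ (d, d, d))
  simp [clp, Prod.ext_iff]

lemma dg_inf (c d : L) : dg (c ⊓ d) = dg c ⊓ dg d := by
  apply Subtype.ext
  rfl

lemma bt_iff {x y z : L} :
    BT ((x, y, z) : L × L × L) ↔
      (x ⊔ y) ⊓ (x ⊔ z) = x ∧ (y ⊔ x) ⊓ (y ⊔ z) = y ∧ (z ⊔ x) ⊓ (z ⊔ y) = z := by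
  simp [BT, clp, Prod.ext_iff]

lemma bt_one {a b : L} (h : b ≤ a) : BT ((a, b, b) : L × L × L) := by
  rw [bt_iff]
  simp [sup_eq_left.2 h, sup_eq_right.2 h, inf_eq_right.2 h, h]

lemma bt_two {a b : L} (h : b ≤ a) : BT ((b, a, b) : L × L × L) := by
  rw [bt_iff]
  simp [sup_eq_left.2 h, sup_eq_right.2 h, inf_eq_right.2 h, h]

lemma bt_three {a b : L} (h : b ≤ a) : BT ((b, b, a) : L × L × L) := by
  rw [bt_iff]
  simp [sup_eq_left.2 h, sup_eq_right.2 h, inf_eq_right.2 h, h]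

section clpcalc

variable {u w W : L}

private lemma clp_L1 (h1 : w ≤ u) (h2 : u ≤ W) :
    clp ((u, w, W) : L × L × L) = (u, u, W) := by
  simp [clp, Prod.ext_iff, sup_eq_left.2 h1, sup_eq_right.2 h1, inf_eq_left.2 h2,
    sup_eq_left.2 h2, sup_eq_right.2 h2, sup_eq_right.2 (h1.trans h2),
    sup_eq_left.2 (h1.trans h2)]

private lemma clp_L2 (h1 : w ≤ u) (h2 : u ≤ W) :
    clp ((w, u, W) : L × L × L) = (u, u, W) := by
  simp [clp, Prod.ext_iff, sup_eq_left.2 h1, sup_eq_right.2 h1, inf_eq_left.2 h2,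
    sup_eq_left.2 h2, sup_eq_right.2 h2, sup_eq_right.2 (h1.trans h2),
    sup_eq_left.2 (h1.trans h2)]

private lemma clp_L3 (h1 : w ≤ u) (h2 : u ≤ W) :
    clp ((w, W, u) : L × L × L) = (u, W, u) := by
  simp [clp, Prod.ext_iff, sup_eq_left.2 h1, sup_eq_right.2 h1, inf_eq_left.2 h2,
    sup_eq_left.2 h2, sup_eq_right.2 h2, sup_eq_right.2 (h1.trans h2),
    sup_eq_left.2 (h1.trans h2), h2]

private lemma clp_L4 (h1 : w ≤ u) :
    clp ((u, u, w) : L × L × L) = (u, u, u) := by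
  simp [clp, Prod.ext_iff, sup_eq_left.2 h1, sup_eq_right.2 h1]

private lemma clp_L5 (h1 : w ≤ u) :
    clp ((u, w, u) : L × L × L) = (u, u, u) := by
  simp [clp, Prod.ext_iff, sup_eq_left.2 h1, sup_eq_right.2 h1]

private lemma clp_L6 {x y : L} (h1 : w ≤ x) (h2 : w ≤ y) :
    clp ((x, y, w) : L × L × L) = (x, y, x ⊓ y) := by
  simp [clp, Prod.ext_iff, sup_eq_left.2 h1, sup_eq_right.2 h1,
    sup_eq_left.2 h2, sup_eq_right.2 h2]

private lemma clp_L7 {x y z : L} (hs : BT ((x, y, z) : L × L × L)) :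
    clp ((x, y, x ⊓ y ⊔ z) : L × L × L) = (x, y, z) := by
  rw [bt_iff] at hs
  obtain ⟨h1, h2, h3⟩ := hs
  have e1 : x ⊔ (x ⊓ y ⊔ z) = x ⊔ z := by
    rw [← sup_assoc, sup_inf_self]
  have e2 : y ⊔ (x ⊓ y ⊔ z) = y ⊔ z := by
    rw [← sup_assoc, inf_comm x y, sup_inf_self]
  have e3 : (x ⊓ y ⊔ z) ⊔ x = z ⊔ x := by
    rw [sup_comm _ x, e1, sup_comm x z]
  have e4 : (x ⊓ y ⊔ z) ⊔ y = z ⊔ y := by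
    rw [sup_comm _ y, e2, sup_comm y z]
  simp only [clp, Prod.ext_iff]
  refine ⟨?_, ?_, ?_⟩
  · show (x ⊔ y) ⊓ (x ⊔ (x ⊓ y ⊔ z)) = x
    rw [e1]; exact h1
  · show (y ⊔ x) ⊓ (y ⊔ (x ⊓ y ⊔ z)) = y
    rw [e2]; exact h2
  · show ((x ⊓ y ⊔ z) ⊔ x) ⊓ ((x ⊓ y ⊔ z) ⊔ y) = z
    rw [e3, e4]; exact h3

end clpcalc

section Cong

variable {Θ : L → L → Prop}

/-- The canonical extension of a congruence to Boolean triples. -/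
def ext3 (Θ : L → L → Prop) : BK L → BK L → Prop := fun s t =>
  Θ s.1.1 t.1.1 ∧ Θ s.1.2.1 t.1.2.1 ∧ Θ s.1.2.2 t.1.2.2

lemma ext3_isCong (hΘ : IsLatticeCongruence Θ) : IsLatticeCongruence (ext3 (L := L) Θ) := by
  obtain ⟨he, hcomp⟩ := hΘ
  have j : ∀ {a b c d : L}, Θ a b → Θ c d → Θ (a ⊔ c) (b ⊔ d) :=
    fun h1 h2 => (hcomp _ _ _ _ h1 h2).1
  have m : ∀ {a b c d : L}, Θ a b → Θ c d → Θ (a ⊓ c) (b ⊓ d) :=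
    fun h1 h2 => (hcomp _ _ _ _ h1 h2).2
  constructor
  · exact ⟨fun s => ⟨he.refl _, he.refl _, he.refl _⟩,
      fun h => ⟨he.symm h.1, he.symm h.2.1, he.symm h.2.2⟩,
      fun h h' => ⟨he.trans h.1 h'.1, he.trans h.2.1 h'.2.1, he.trans h.2.2 h'.2.2⟩⟩
  · rintro a b c d ⟨h1, h2, h3⟩ ⟨h4, h5, h6⟩
    refine ⟨⟨?_, ?_, ?_⟩, ⟨m h1 h4, m h2 h5, m h3 h6⟩⟩
    · exact m (j (j h1 h4) (j h2 h5)) (j (j h1 h4) (j h3 h6))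
    · exact m (j (j h2 h5) (j h1 h4)) (j (j h2 h5) (j h3 h6))
    · exact m (j (j h3 h6) (j h1 h4)) (j (j h3 h6) (j h2 h5))

lemma ext3_restrict (a b : L) : ext3 Θ (dg a) (dg b) ↔ Θ a b := by
  constructor
  · exact fun h => h.1
  · exact fun h => ⟨h, h, h⟩

lemma ext3_unique (Φ' : BK L → BK L → Prop)
    (hc : IsLatticeCongruence Φ') (hr : ∀ a b : L, Φ' (dg a) (dg b) ↔ Θ a b) :
    Φ' = ext3 Θ := by
  have jc : ∀ {a b c d : BK L}, Φ' a b → Φ' c d → Φ' (a ⊔ c) (b ⊔ d) :=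
    fun h1 h2 => (hc.2 _ _ _ _ h1 h2).1
  have mc : ∀ {a b c d : BK L}, Φ' a b → Φ' c d → Φ' (a ⊓ c) (b ⊓ d) :=
    fun h1 h2 => (hc.2 _ _ _ _ h1 h2).2
  have rfl' : ∀ a : BK L, Φ' a a := fun a => hc.1.refl a
  funext s t
  apply propext
  obtain ⟨⟨x, y, z⟩, hs⟩ := s
  obtain ⟨⟨x', y', z'⟩, ht⟩ := t
  set w := x ⊓ y ⊓ z ⊓ (x' ⊓ y' ⊓ z') with hwdef
  set W := x ⊔ y ⊔ z ⊔ (x' ⊔ y' ⊔ z') with hWdef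
  have hwx : w ≤ x := le_trans inf_le_left (le_trans inf_le_left inf_le_left)
  have hwy : w ≤ y := le_trans inf_le_left (le_trans inf_le_left inf_le_right)
  have hwz : w ≤ z := le_trans inf_le_left inf_le_right
  have hwx' : w ≤ x' := le_trans inf_le_right (le_trans inf_le_left inf_le_left)
  have hwy' : w ≤ y' := le_trans inf_le_right (le_trans inf_le_left inf_le_right)
  have hwz' : w ≤ z' := le_trans inf_le_right inf_le_right
  have hxW : x ≤ W := le_trans (le_trans le_sup_left le_sup_left) le_sup_left
  have hyW : y ≤ W := le_trans (le_trans le_sup_right le_sup_left) le_sup_left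
  have hzW : z ≤ W := le_trans le_sup_right le_sup_left
  have hx'W : x' ≤ W := le_trans (le_trans le_sup_left le_sup_left) le_sup_right
  have hy'W : y' ≤ W := le_trans (le_trans le_sup_right le_sup_left) le_sup_right
  have hz'W : z' ≤ W := le_trans le_sup_right le_sup_right
  have hwW : w ≤ W := hwx.trans hxW
  -- meets with the local "axis" elements
  have eqm1 : ∀ (p q r : L) (hb : BT ((p, q, r) : L × L × L))
      (h1 : w ≤ p) (h2 : w ≤ q) (h3 : w ≤ r) (h4 : p ≤ W),
      (⟨(p, q, r), hb⟩ : BK L) ⊓ ⟨(W, w, w), bt_one hwW⟩ = ⟨(p, w, w), bt_one h1⟩ := by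
    intro p q r hb h1 h2 h3 h4
    apply Subtype.ext
    show ((p, q, r) : L × L × L) ⊓ (W, w, w) = (p, w, w)
    simp [Prod.ext_iff, inf_eq_left.2 h4, inf_eq_right.2 h2, inf_eq_right.2 h3]
  have eqm2 : ∀ (p q r : L) (hb : BT ((p, q, r) : L × L × L))
      (h1 : w ≤ p) (h2 : w ≤ q) (h3 : w ≤ r) (h4 : q ≤ W),
      (⟨(p, q, r), hb⟩ : BK L) ⊓ ⟨(w, W, w), bt_two hwW⟩ = ⟨(w, q, w), bt_two h2⟩ := by
    intro p q r hb h1 h2 h3 h4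
    apply Subtype.ext
    show ((p, q, r) : L × L × L) ⊓ (w, W, w) = (w, q, w)
    simp [Prod.ext_iff, inf_eq_left.2 h4, inf_eq_right.2 h1, inf_eq_right.2 h3]
  have eqm3 : ∀ (p q r : L) (hb : BT ((p, q, r) : L × L × L))
      (h1 : w ≤ p) (h2 : w ≤ q) (h3 : w ≤ r) (h4 : r ≤ W),
      (⟨(p, q, r), hb⟩ : BK L) ⊓ ⟨(w, w, W), bt_three hwW⟩ = ⟨(w, w, r), bt_three h3⟩ := by
    intro p q r hb h1 h2 h3 h4
    apply Subtype.ext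
    show ((p, q, r) : L × L × L) ⊓ (w, w, W) = (w, w, r)
    simp [Prod.ext_iff, inf_eq_left.2 h4, inf_eq_right.2 h1, inf_eq_right.2 h2]
  -- wing transfers
  have tr12 : ∀ (p : L) (h1 : w ≤ p) (h2 : p ≤ W),
      ((⟨(p, w, w), bt_one h1⟩ : BK L) ⊔ ⟨(w, w, W), bt_three hwW⟩)
        ⊓ ⟨(w, W, w), bt_two hwW⟩ = ⟨(w, p, w), bt_two h1⟩ := by
    intro p h1 h2
    apply Subtype.ext
    show clp (((p, w, w) : L × L × L) ⊔ (w, w, W)) ⊓ ((w, W, w) : L × L × L) = (w, p, w)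
    have e : ((p, w, w) : L × L × L) ⊔ (w, w, W) = (p, w, W) := by
      simp [Prod.ext_iff, sup_eq_left.2 h1, sup_eq_right.2 (h1.trans h2), h1, h2,
        sup_eq_right.2 h1]
    rw [e, clp_L1 h1 h2]
    simp [Prod.ext_iff, inf_eq_right.2 h1, inf_eq_left.2 h2,
      inf_eq_right.2 (h1.trans h2), h1, h2]
  have tr21 : ∀ (p : L) (h1 : w ≤ p) (h2 : p ≤ W),
      ((⟨(w, p, w), bt_two h1⟩ : BK L) ⊔ ⟨(w, w, W), bt_three hwW⟩)
        ⊓ ⟨(W, w, w), bt_one hwW⟩ = ⟨(p, w, w), bt_one h1⟩ := by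
    intro p h1 h2
    apply Subtype.ext
    show clp (((w, p, w) : L × L × L) ⊔ (w, w, W)) ⊓ ((W, w, w) : L × L × L) = (p, w, w)
    have e : ((w, p, w) : L × L × L) ⊔ (w, w, W) = (w, p, W) := by
      simp [Prod.ext_iff, sup_eq_right.2 h1, sup_eq_right.2 (h1.trans h2), h1, h2,
        sup_eq_left.2 h1]
    rw [e, clp_L2 h1 h2]
    simp [Prod.ext_iff, inf_eq_right.2 h1, inf_eq_left.2 h2,
      inf_eq_right.2 (h1.trans h2), h1, h2]
  have tr31 : ∀ (p : L) (h1 : w ≤ p) (h2 : p ≤ W),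
      ((⟨(w, w, p), bt_three h1⟩ : BK L) ⊔ ⟨(w, W, w), bt_two hwW⟩)
        ⊓ ⟨(W, w, w), bt_one hwW⟩ = ⟨(p, w, w), bt_one h1⟩ := by
    intro p h1 h2
    apply Subtype.ext
    show clp (((w, w, p) : L × L × L) ⊔ (w, W, w)) ⊓ ((W, w, w) : L × L × L) = (p, w, w)
    have e : ((w, w, p) : L × L × L) ⊔ (w, W, w) = (w, W, p) := by
      simp [Prod.ext_iff, sup_eq_right.2 h1, sup_eq_right.2 (h1.trans h2), h1, h2,
        sup_eq_left.2 h1]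
    rw [e, clp_L3 h1 h2]
    simp [Prod.ext_iff, inf_eq_right.2 h1, inf_eq_left.2 h2,
      inf_eq_right.2 (h1.trans h2), inf_eq_left.2 (h1.trans h2), h1, h2]
  -- wing joins give diagonals
  have dj12 : ∀ (p : L) (h1 : w ≤ p),
      ((⟨(p, w, w), bt_one h1⟩ : BK L) ⊔ ⟨(w, p, w), bt_two h1⟩) = dg p := by
    intro p h1
    apply Subtype.ext
    show clp (((p, w, w) : L × L × L) ⊔ (w, p, w)) = (p, p, p)
    have e : ((p, w, w) : L × L × L) ⊔ (w, p, w) = (p, p, w) := by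
      simp [Prod.ext_iff, sup_eq_left.2 h1, sup_eq_right.2 h1]
    rw [e, clp_L4 h1]
  have dj13 : ∀ (p : L) (h1 : w ≤ p),
      ((⟨(p, w, w), bt_one h1⟩ : BK L) ⊔ ⟨(w, w, p), bt_three h1⟩) = dg p := by
    intro p h1
    apply Subtype.ext
    show clp (((p, w, w) : L × L × L) ⊔ (w, w, p)) = (p, p, p)
    have e : ((p, w, w) : L × L × L) ⊔ (w, w, p) = (p, w, p) := by
      simp [Prod.ext_iff, sup_eq_left.2 h1, sup_eq_right.2 h1]
    rw [e, clp_L5 h1]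
  -- diagonals meet the axes in the wings
  have dE1 : ∀ (p : L) (h1 : w ≤ p) (h2 : p ≤ W),
      dg p ⊓ (⟨(W, w, w), bt_one hwW⟩ : BK L) = ⟨(p, w, w), bt_one h1⟩ := by
    intro p h1 h2
    apply Subtype.ext
    show ((p, p, p) : L × L × L) ⊓ (W, w, w) = (p, w, w)
    simp [Prod.ext_iff, inf_eq_left.2 h2, inf_eq_right.2 h1]
  have dE2 : ∀ (p : L) (h1 : w ≤ p) (h2 : p ≤ W),
      dg p ⊓ (⟨(w, W, w), bt_two hwW⟩ : BK L) = ⟨(w, p, w), bt_two h1⟩ := by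
    intro p h1 h2
    apply Subtype.ext
    show ((p, p, p) : L × L × L) ⊓ (w, W, w) = (w, p, w)
    simp [Prod.ext_iff, inf_eq_left.2 h2, inf_eq_right.2 h1]
  have dE3 : ∀ (p : L) (h1 : w ≤ p) (h2 : p ≤ W),
      dg p ⊓ (⟨(w, w, W), bt_three hwW⟩ : BK L) = ⟨(w, w, p), bt_three h1⟩ := by
    intro p h1 h2
    apply Subtype.ext
    show ((p, p, p) : L × L × L) ⊓ (w, w, W) = (w, w, p)
    simp [Prod.ext_iff, inf_eq_left.2 h2, inf_eq_right.2 h1]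
  -- decomposition into wings
  have dcmp : ∀ (p q r : L) (hb : BT ((p, q, r) : L × L × L))
      (h1 : w ≤ p) (h2 : w ≤ q) (h3 : w ≤ r),
      ((⟨(p, w, w), bt_one h1⟩ : BK L) ⊔ ⟨(w, q, w), bt_two h2⟩)
        ⊔ ⟨(w, w, r), bt_three h3⟩ = ⟨(p, q, r), hb⟩ := by
    intro p q r hb h1 h2 h3
    apply Subtype.ext
    show clp ((clp (((p, w, w) : L × L × L) ⊔ (w, q, w))) ⊔ ((w, w, r) : L × L × L))
      = (p, q, r)
    have e : ((p, w, w) : L × L × L) ⊔ (w, q, w) = (p, q, w) := by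
      simp [Prod.ext_iff, sup_eq_left.2 h1, sup_eq_right.2 h2]
    rw [e, clp_L6 h1 h2]
    have e2 : ((p, q, p ⊓ q) : L × L × L) ⊔ (w, w, r) = (p, q, p ⊓ q ⊔ r) := by
      simp [Prod.ext_iff, sup_eq_left.2 h1, sup_eq_left.2 h2]
    rw [e2, clp_L7 hb]
  constructor
  · intro hST
    refine ⟨?_, ?_, ?_⟩
    · have h1 := mc hST (rfl' ⟨(W, w, w), bt_one hwW⟩)
      rw [eqm1 x y z hs hwx hwy hwz hxW, eqm1 x' y' z' ht hwx' hwy' hwz' hx'W] at h1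
      have h2 := mc (jc h1 (rfl' ⟨(w, w, W), bt_three hwW⟩))
        (rfl' ⟨(w, W, w), bt_two hwW⟩)
      rw [tr12 x hwx hxW, tr12 x' hwx' hx'W] at h2
      have h3 := jc h1 h2
      rw [dj12 x hwx, dj12 x' hwx'] at h3
      exact (hr _ _).1 h3
    · have h1 := mc hST (rfl' ⟨(w, W, w), bt_two hwW⟩)
      rw [eqm2 x y z hs hwx hwy hwz hyW, eqm2 x' y' z' ht hwx' hwy' hwz' hy'W] at h1
      have h2 := mc (jc h1 (rfl' ⟨(w, w, W), bt_three hwW⟩))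
        (rfl' ⟨(W, w, w), bt_one hwW⟩)
      rw [tr21 y hwy hyW, tr21 y' hwy' hy'W] at h2
      have h3 := jc h2 h1
      rw [dj12 y hwy, dj12 y' hwy'] at h3
      exact (hr _ _).1 h3
    · have h1 := mc hST (rfl' ⟨(w, w, W), bt_three hwW⟩)
      rw [eqm3 x y z hs hwx hwy hwz hzW, eqm3 x' y' z' ht hwx' hwy' hwz' hz'W] at h1
      have h2 := mc (jc h1 (rfl' ⟨(w, W, w), bt_two hwW⟩))
        (rfl' ⟨(W, w, w), bt_one hwW⟩)
      rw [tr31 z hwz hzW, tr31 z' hwz' hz'W] at h2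
      have h3 := jc h2 h1
      rw [dj13 z hwz, dj13 z' hwz'] at h3
      exact (hr _ _).1 h3
  · rintro ⟨h1, h2, h3⟩
    have d1 := mc ((hr x x').2 h1) (rfl' ⟨(W, w, w), bt_one hwW⟩)
    rw [dE1 x hwx hxW, dE1 x' hwx' hx'W] at d1
    have d2 := mc ((hr y y').2 h2) (rfl' ⟨(w, W, w), bt_two hwW⟩)
    rw [dE2 y hwy hyW, dE2 y' hwy' hy'W] at d2
    have d3 := mc ((hr z z').2 h3) (rfl' ⟨(w, w, W), bt_three hwW⟩)
    rw [dE3 z hwz hzW, dE3 z' hwz' hz'W] at d3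
    have hj := jc (jc d1 d2) d3
    rw [dcmp x y z hs hwx hwy hwz, dcmp x' y' z' ht hwx' hwy' hwz'] at hj
    exact hj

end Cong

end BTriple

open BTriple in
/-- Every lattice with more than one element has a proper congruence-preserving
*extensive* extension: every element of the extension lies between two elements
of the image of `L`. -/
theorem proper_congruence_preserving_extensive_extension
    (L : Type u) [Lattice L] [Nontrivial L] :
    ∃ (K : Type u) (_ : Lattice K) (f : L → K),
      Function.Injective f ∧
      (∀ x y : L, f (x ⊔ y) = f x ⊔ f y) ∧
      (∀ x y : L, f (x ⊓ y) = f x ⊓ f y) ∧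
      ¬ Function.Surjective f ∧
      (∀ Θ : L → L → Prop, IsLatticeCongruence Θ →
        ∃! Φ : K → K → Prop,
          IsLatticeCongruence Φ ∧ ∀ x y : L, Φ (f x) (f y) ↔ Θ x y) ∧
      ∀ k : K, ∃ u v : L, f u ≤ k ∧ k ≤ f v := by
  refine ⟨BK L, inferInstance, dg, dg_inj, fun x y => dg_sup x y, fun x y => dg_inf x y,
    ?_, ?_, ?_⟩
  · -- not surjective
    obtain ⟨a, b, hab⟩ := exists_pair_ne L
    intro hsurj
    obtain ⟨c, hc⟩ := hsurj ⟨(a ⊔ b, a ⊓ b, a ⊓ b), bt_one inf_le_sup⟩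
    have h1 : c = a ⊔ b := congrArg (fun k : BK L => k.1.1) hc
    have h2 : c = a ⊓ b := congrArg (fun k : BK L => k.1.2.1) hc
    apply hab
    have hba : a ⊔ b ≤ a ⊓ b := le_of_eq (h1.symm.trans h2)
    exact le_antisymm (le_sup_left.trans (hba.trans inf_le_right))
      (le_sup_right.trans (hba.trans inf_le_left))
  · -- congruences
    intro Θ hΘ
    refine ⟨ext3 Θ, ⟨ext3_isCong hΘ, fun x y => ext3_restrict x y⟩, ?_⟩
    rintro Φ' ⟨hc, hr⟩
    exact ext3_unique Φ' hc hr
  · -- extensive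
    rintro ⟨⟨x, y, z⟩, hk⟩
    refine ⟨x ⊓ y ⊓ z, x ⊔ y ⊔ z, ?_, ?_⟩
    · exact ⟨inf_le_left.trans inf_le_left, inf_le_left.trans inf_le_right, inf_le_right⟩
    · exact ⟨le_sup_left.trans le_sup_left, le_sup_right.trans le_sup_left, le_sup_right⟩
end

section
/- Every lattice L with more than one element has a proper congruence-preserving extension K in which L is an ideal; that is, there exist a lattice K and a non-surjective lattice embedding f : L → K such that (1) for every congruence Θ of L there is exactly one congruence Φ of K with Φ(f x, f y) ↔ Θ(x, y) for all x, y ∈ L, and (2) the image of f is an ideal of K (a nonempty downward-closed subset closed under binary joins). -/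
universe u

namespace GlueExt

variable {L : Type u} [Lattice L]

/-- Balanced (Boolean) triples. -/
def bal (t : L × L × L) : Prop :=
  t.1 = (t.1 ⊔ t.2.1) ⊓ (t.1 ⊔ t.2.2) ∧
  t.2.1 = (t.1 ⊔ t.2.1) ⊓ (t.2.1 ⊔ t.2.2) ∧
  t.2.2 = (t.1 ⊔ t.2.2) ⊓ (t.2.1 ⊔ t.2.2)

/-- Balanced closure. -/
def r (t : L × L × L) : L × L × L :=
  ((t.1 ⊔ t.2.1) ⊓ (t.1 ⊔ t.2.2),
   (t.1 ⊔ t.2.1) ⊓ (t.2.1 ⊔ t.2.2),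
   (t.1 ⊔ t.2.2) ⊓ (t.2.1 ⊔ t.2.2))

lemma le_r (t : L × L × L) : t ≤ r t :=
  ⟨le_inf le_sup_left le_sup_left,
   le_inf le_sup_right le_sup_left,
   le_inf le_sup_right le_sup_right⟩

lemma r_mono {s t : L × L × L} (h : s ≤ t) : r s ≤ r t :=
  ⟨inf_le_inf (sup_le_sup h.1 h.2.1) (sup_le_sup h.1 h.2.2),
   inf_le_inf (sup_le_sup h.1 h.2.1) (sup_le_sup h.2.1 h.2.2),
   inf_le_inf (sup_le_sup h.1 h.2.2) (sup_le_sup h.2.1 h.2.2)⟩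

lemma bal_r (t : L × L × L) : bal (r t) := by
  obtain ⟨x, y, z⟩ := t
  refine ⟨?_, ?_, ?_⟩ <;> dsimp [bal, r]
  · exact le_antisymm (le_inf le_sup_left le_sup_left)
      (le_inf (inf_le_left.trans (sup_le inf_le_left inf_le_left))
        (inf_le_right.trans (sup_le inf_le_right inf_le_left)))
  · exact le_antisymm (le_inf le_sup_right le_sup_left)
      (le_inf (inf_le_left.trans (sup_le inf_le_left inf_le_left))
        (inf_le_right.trans (sup_le inf_le_right inf_le_right)))
  · exact le_antisymm (le_inf le_sup_right le_sup_right)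
      (le_inf (inf_le_left.trans (sup_le inf_le_right inf_le_left))
        (inf_le_right.trans (sup_le inf_le_right inf_le_right)))

lemma r_eq_of_bal {t : L × L × L} (h : bal t) : r t = t := by
  obtain ⟨x, y, z⟩ := t
  exact congrArg₂ Prod.mk h.1.symm (congrArg₂ Prod.mk h.2.1.symm h.2.2.symm)

lemma bal_inf {s t : L × L × L} (hs : bal s) (ht : bal t) : bal (s ⊓ t) := by
  have hl : ∀ p q p' q' : L, (p ⊓ p') ⊔ (q ⊓ q') ≤ p ⊔ q := fun p q p' q' =>
    sup_le (inf_le_left.trans le_sup_left) (inf_le_left.trans le_sup_right)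
  have hr : ∀ p q p' q' : L, (p ⊓ p') ⊔ (q ⊓ q') ≤ p' ⊔ q' := fun p q p' q' =>
    sup_le (inf_le_right.trans le_sup_left) (inf_le_right.trans le_sup_right)
  refine ⟨?_, ?_, ?_⟩
  · exact le_antisymm (le_inf le_sup_left le_sup_left)
      (le_inf ((inf_le_inf (hl _ _ _ _) (hl _ _ _ _)).trans hs.1.ge)
        ((inf_le_inf (hr _ _ _ _) (hr _ _ _ _)).trans ht.1.ge))
  · exact le_antisymm (le_inf le_sup_right le_sup_left)
      (le_inf ((inf_le_inf (hl _ _ _ _) (hl _ _ _ _)).trans hs.2.1.ge)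
        ((inf_le_inf (hr _ _ _ _) (hr _ _ _ _)).trans ht.2.1.ge))
  · exact le_antisymm (le_inf le_sup_right le_sup_right)
      (le_inf ((inf_le_inf (hl _ _ _ _) (hl _ _ _ _)).trans hs.2.2.ge)
        ((inf_le_inf (hr _ _ _ _) (hr _ _ _ _)).trans ht.2.2.ge))

/-- Patterns of balanced triples. -/
lemma bal_tss {s t : L} (h : s ≤ t) : bal (t, s, s) := by
  refine ⟨?_, ?_, ?_⟩ <;>
    simp [sup_eq_left.mpr h, sup_eq_right.mpr h, inf_eq_left.mpr h, inf_eq_right.mpr h]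

lemma bal_sts {s t : L} (h : s ≤ t) : bal (s, t, s) := by
  refine ⟨?_, ?_, ?_⟩ <;>
    simp [sup_eq_left.mpr h, sup_eq_right.mpr h, inf_eq_left.mpr h, inf_eq_right.mpr h]

lemma bal_sst {s t : L} (h : s ≤ t) : bal (s, s, t) := by
  refine ⟨?_, ?_, ?_⟩ <;>
    simp [sup_eq_left.mpr h, sup_eq_right.mpr h, inf_eq_left.mpr h, inf_eq_right.mpr h]

/-- Membership predicate for the extension lattice. -/
def P (a : L) (t : L × L × L) : Prop :=
  (t.2.1 = a ∧ t.2.2 = a) ∨ (a ≤ t.1 ∧ a ≤ t.2.1 ∧ a ≤ t.2.2 ∧ bal t)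

def K (a : L) : Type u := {t : L × L × L // P a t}

variable {a : L}

instance : PartialOrder (K a) := Subtype.partialOrder _

lemma y_ge (u : K a) : a ≤ u.val.2.1 := by
  rcases u.2 with h | h
  · exact h.1.ge
  · exact h.2.1

lemma z_ge (u : K a) : a ≤ u.val.2.2 := by
  rcases u.2 with h | h
  · exact h.2.ge
  · exact h.2.2.1

lemma r_mem (s : L × L × L) (h1 : a ≤ s.2.1) (h2 : a ≤ s.2.2) : P a (r s) :=
  Or.inr ⟨le_inf (h1.trans le_sup_right) (h2.trans le_sup_right),
    le_inf (h1.trans le_sup_right) (h1.trans le_sup_left),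
    le_inf (h2.trans le_sup_right) (h2.trans le_sup_right), bal_r s⟩

lemma inf_mem (u v : K a) : P a (u.val ⊓ v.val) := by
  rcases u.2 with h | h
  · exact Or.inl ⟨by show u.val.2.1 ⊓ v.val.2.1 = a; rw [h.1]; exact inf_eq_left.mpr (y_ge v),
      by show u.val.2.2 ⊓ v.val.2.2 = a; rw [h.2]; exact inf_eq_left.mpr (z_ge v)⟩
  · rcases v.2 with h' | h'
    · exact Or.inl ⟨by show u.val.2.1 ⊓ v.val.2.1 = a; rw [h'.1]; exact inf_eq_right.mpr (y_ge u),
        by show u.val.2.2 ⊓ v.val.2.2 = a; rw [h'.2]; exact inf_eq_right.mpr (z_ge u)⟩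
    · exact Or.inr ⟨le_inf h.1 h'.1, le_inf h.2.1 h'.2.1, le_inf h.2.2.1 h'.2.2.1,
        bal_inf h.2.2.2 h'.2.2.2⟩

open Classical in
noncomputable def ksup (u v : K a) : K a :=
  if u.val.2.1 ⊔ v.val.2.1 = a ∧ u.val.2.2 ⊔ v.val.2.2 = a then
    ⟨(u.val.1 ⊔ v.val.1, a, a), Or.inl ⟨rfl, rfl⟩⟩
  else
    ⟨r (u.val ⊔ v.val), r_mem _ (le_trans (y_ge u) le_sup_left) (le_trans (z_ge u) le_sup_left)⟩

noncomputable instance : Lattice (K a) :=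
  { (inferInstance : PartialOrder (K a)) with
    sup := ksup
    le_sup_left := by
      intro u v
      show u.val ≤ (ksup u v).val
      unfold ksup
      by_cases h : u.val.2.1 ⊔ v.val.2.1 = a ∧ u.val.2.2 ⊔ v.val.2.2 = a <;> simp only [h]
      · exact ⟨le_sup_left, le_of_le_of_eq le_sup_left h.1, le_of_le_of_eq le_sup_left h.2⟩
      · exact le_trans le_sup_left (le_r _)
    le_sup_right := by
      intro u v
      show v.val ≤ (ksup u v).val
      unfold ksup
      by_cases h : u.val.2.1 ⊔ v.val.2.1 = a ∧ u.val.2.2 ⊔ v.val.2.2 = a <;> simp only [h]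
      · exact ⟨le_sup_right, le_of_le_of_eq le_sup_right h.1, le_of_le_of_eq le_sup_right h.2⟩
      · exact le_trans le_sup_right (le_r _)
    sup_le := by
      intro u v w hu hv
      show (ksup u v).val ≤ w.val
      unfold ksup
      by_cases h : u.val.2.1 ⊔ v.val.2.1 = a ∧ u.val.2.2 ⊔ v.val.2.2 = a <;> simp only [h]
      · exact ⟨sup_le hu.1 hv.1, y_ge w, z_ge w⟩
      · have hbw : bal w.val := by
          rcases w.2 with hw | hw
          · exfalso
            exact h ⟨le_antisymm (sup_le (hu.2.1.trans hw.1.le) (hv.2.1.trans hw.1.le))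
                ((y_ge u).trans le_sup_left),
              le_antisymm (sup_le (hu.2.2.trans hw.2.le) (hv.2.2.trans hw.2.le))
                ((z_ge u).trans le_sup_left)⟩
          · exact hw.2.2.2
        exact (r_mono (sup_le hu hv)).trans (r_eq_of_bal hbw).le
    inf := fun u v => ⟨u.val ⊓ v.val, inf_mem u v⟩
    inf_le_left := fun u v => (inf_le_left : u.val ⊓ v.val ≤ u.val)
    inf_le_right := fun u v => (inf_le_right : u.val ⊓ v.val ≤ v.val)
    le_inf := fun u v w h1 h2 => (le_inf h1 h2 : u.val ≤ v.val ⊓ w.val) }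

lemma inf_val (u v : K a) : (u ⊓ v).val = u.val ⊓ v.val := rfl

lemma sup_val_pos (u v : K a)
    (h : u.val.2.1 ⊔ v.val.2.1 = a ∧ u.val.2.2 ⊔ v.val.2.2 = a) :
    (u ⊔ v).val = (u.val.1 ⊔ v.val.1, a, a) := by
  show (ksup u v).val = _
  unfold ksup
  simp only [h]
  rfl

lemma sup_val_neg (u v : K a)
    (h : ¬(u.val.2.1 ⊔ v.val.2.1 = a ∧ u.val.2.2 ⊔ v.val.2.2 = a)) :
    (u ⊔ v).val = r (u.val ⊔ v.val) := by
  show (ksup u v).val = _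
  unfold ksup
  simp only [h]
  rfl

lemma sup_val_of (u v : K a) (hu : a ≤ u.val.1) (hv : a ≤ v.val.1) :
    (u ⊔ v).val = r (u.val ⊔ v.val) := by
  by_cases h : u.val.2.1 ⊔ v.val.2.1 = a ∧ u.val.2.2 ⊔ v.val.2.2 = a
  · rw [sup_val_pos u v h]
    have ha : a ≤ u.val.1 ⊔ v.val.1 := hu.trans le_sup_left
    show _ = r (u.val.1 ⊔ v.val.1, u.val.2.1 ⊔ v.val.2.1, u.val.2.2 ⊔ v.val.2.2)
    rw [h.1, h.2]
    simp [r, sup_eq_left.mpr ha, inf_eq_right.mpr ha]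
  · exact sup_val_neg u v h


/-! ### Special elements -/

def fK (a : L) (p : L) : K a := ⟨(p, a, a), Or.inl ⟨rfl, rfl⟩⟩

def e2 (a : L) (c : L) (hc : a ≤ c) : K a :=
  ⟨(a, c, a), Or.inr ⟨le_rfl, hc, le_rfl, bal_sts hc⟩⟩

def e3 (a : L) (c : L) (hc : a ≤ c) : K a :=
  ⟨(a, a, c), Or.inr ⟨le_rfl, le_rfl, hc, bal_sst hc⟩⟩

def dK (a : L) (c : L) (hc : a ≤ c) : K a :=
  ⟨(c, c, c), Or.inr ⟨hc, hc, hc, by refine ⟨?_, ?_, ?_⟩ <;> simp⟩⟩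

/-- the element (t,s,s), for a ≤ s ≤ t -/
def cA (a : L) (s t : L) (has : a ≤ s) (hst : s ≤ t) : K a :=
  ⟨(t, s, s), Or.inr ⟨has.trans hst, has, has, bal_tss hst⟩⟩

/-- the element (s,t,s), for a ≤ s ≤ t -/
def cB (a : L) (s t : L) (has : a ≤ s) (hst : s ≤ t) : K a :=
  ⟨(s, t, s), Or.inr ⟨has, has.trans hst, has, bal_sts hst⟩⟩

/-- the element (s,s,t), for a ≤ s ≤ t -/
def cC (a : L) (s t : L) (has : a ≤ s) (hst : s ≤ t) : K a :=
  ⟨(s, s, t), Or.inr ⟨has, has, has.trans hst, bal_sst hst⟩⟩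

lemma fK_sup (p q : L) : fK a (p ⊔ q) = fK a p ⊔ fK a q := by
  refine Subtype.ext ?_
  rw [sup_val_pos _ _ ⟨sup_idem a, sup_idem a⟩]
  rfl

lemma fK_inf (p q : L) : fK a (p ⊓ q) = fK a p ⊓ fK a q := by
  refine Subtype.ext ?_
  rw [inf_val]
  show (p ⊓ q, a, a) = (p ⊓ q, a ⊓ a, a ⊓ a)
  simp

lemma fK_inj : Function.Injective (fK a) := by
  intro p q h
  have := congrArg (fun w : K a => w.val.1) h
  exact this

lemma cong_sup {α : Type*} [Lattice α] {Φ : α → α → Prop} (hΦ : IsLatticeCongruence Φ)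
    (w : α) {u v : α} (h : Φ u v) : Φ (u ⊔ w) (v ⊔ w) :=
  (hΦ.2 u v w w h (hΦ.1.refl w)).1

lemma cong_inf {α : Type*} [Lattice α] {Φ : α → α → Prop} (hΦ : IsLatticeCongruence Φ)
    (w : α) {u v : α} (h : Φ u v) : Φ (u ⊓ w) (v ⊓ w) :=
  (hΦ.2 u v w w h (hΦ.1.refl w)).2

/-! ### lattice identities in `K a` -/

section Identities

variable {s t : L} (has : a ≤ s) (hst : s ≤ t)

lemma id_fK_dK : fK a t ⊔ dK a s has = cA a s t has hst := by
  refine Subtype.ext ?_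
  rw [sup_val_of _ _ (has.trans hst) has]
  show r (t ⊔ s, a ⊔ s, a ⊔ s) = (t, s, s)
  simp [r, sup_eq_left.mpr has, sup_eq_right.mpr has, inf_eq_left.mpr has, inf_eq_right.mpr has, sup_eq_left.mpr hst, sup_eq_right.mpr hst, inf_eq_left.mpr hst, inf_eq_right.mpr hst, sup_eq_left.mpr (has.trans hst), sup_eq_right.mpr (has.trans hst), inf_eq_left.mpr (has.trans hst), inf_eq_right.mpr (has.trans hst)]

lemma id_fKs_dK : fK a s ⊔ dK a s has = dK a s has := by
  refine Subtype.ext ?_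
  rw [sup_val_of _ _ has has]
  show r (s ⊔ s, a ⊔ s, a ⊔ s) = (s, s, s)
  simp [r, sup_eq_left.mpr has, sup_eq_right.mpr has, inf_eq_left.mpr has, inf_eq_right.mpr has]

lemma id_cA_e3 : cA a s t has hst ⊔ e3 a t (has.trans hst) = dK a t (has.trans hst) := by
  refine Subtype.ext ?_
  rw [sup_val_of _ _ (has.trans hst) le_rfl]
  show r (t ⊔ a, s ⊔ a, s ⊔ t) = (t, t, t)
  simp [r, sup_eq_left.mpr has, sup_eq_right.mpr has, inf_eq_left.mpr has, inf_eq_right.mpr has, sup_eq_left.mpr hst, sup_eq_right.mpr hst, inf_eq_left.mpr hst, inf_eq_right.mpr hst, sup_eq_left.mpr (has.trans hst), sup_eq_right.mpr (has.trans hst), inf_eq_left.mpr (has.trans hst), inf_eq_right.mpr (has.trans hst)]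

lemma id_cA_e2 : cA a s t has hst ⊔ e2 a t (has.trans hst) = dK a t (has.trans hst) := by
  refine Subtype.ext ?_
  rw [sup_val_of _ _ (has.trans hst) le_rfl]
  show r (t ⊔ a, s ⊔ t, s ⊔ a) = (t, t, t)
  simp [r, sup_eq_left.mpr has, sup_eq_right.mpr has, inf_eq_left.mpr has, inf_eq_right.mpr has, sup_eq_left.mpr hst, sup_eq_right.mpr hst, inf_eq_left.mpr hst, inf_eq_right.mpr hst, sup_eq_left.mpr (has.trans hst), sup_eq_right.mpr (has.trans hst), inf_eq_left.mpr (has.trans hst), inf_eq_right.mpr (has.trans hst)]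

lemma id_dK_e3 : dK a s has ⊔ e3 a t (has.trans hst) = cC a s t has hst := by
  refine Subtype.ext ?_
  rw [sup_val_of _ _ has le_rfl]
  show r (s ⊔ a, s ⊔ a, s ⊔ t) = (s, s, t)
  simp [r, sup_eq_left.mpr has, sup_eq_right.mpr has, inf_eq_left.mpr has, inf_eq_right.mpr has, sup_eq_left.mpr hst, sup_eq_right.mpr hst, inf_eq_left.mpr hst, inf_eq_right.mpr hst, sup_eq_left.mpr (has.trans hst), sup_eq_right.mpr (has.trans hst), inf_eq_left.mpr (has.trans hst), inf_eq_right.mpr (has.trans hst)]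

lemma id_dK_e2 : dK a s has ⊔ e2 a t (has.trans hst) = cB a s t has hst := by
  refine Subtype.ext ?_
  rw [sup_val_of _ _ has le_rfl]
  show r (s ⊔ a, s ⊔ t, s ⊔ a) = (s, t, s)
  simp [r, sup_eq_left.mpr has, sup_eq_right.mpr has, inf_eq_left.mpr has, inf_eq_right.mpr has, sup_eq_left.mpr hst, sup_eq_right.mpr hst, inf_eq_left.mpr hst, inf_eq_right.mpr hst, sup_eq_left.mpr (has.trans hst), sup_eq_right.mpr (has.trans hst), inf_eq_left.mpr (has.trans hst), inf_eq_right.mpr (has.trans hst)]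

lemma id_e2_dK : e2 a t (has.trans hst) ⊔ dK a s has = cB a s t has hst := by
  refine Subtype.ext ?_
  rw [sup_val_of _ _ le_rfl has]
  show r (a ⊔ s, t ⊔ s, a ⊔ s) = (s, t, s)
  simp [r, sup_eq_left.mpr has, sup_eq_right.mpr has, inf_eq_left.mpr has, inf_eq_right.mpr has, sup_eq_left.mpr hst, sup_eq_right.mpr hst, inf_eq_left.mpr hst, inf_eq_right.mpr hst, sup_eq_left.mpr (has.trans hst), sup_eq_right.mpr (has.trans hst), inf_eq_left.mpr (has.trans hst), inf_eq_right.mpr (has.trans hst)]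

lemma id_e2s_dK : e2 a s has ⊔ dK a s has = dK a s has := by
  refine Subtype.ext ?_
  rw [sup_val_of _ _ le_rfl has]
  show r (a ⊔ s, s ⊔ s, a ⊔ s) = (s, s, s)
  simp [r, sup_eq_left.mpr has, sup_eq_right.mpr has, inf_eq_left.mpr has, inf_eq_right.mpr has]

lemma id_e3_dK : e3 a t (has.trans hst) ⊔ dK a s has = cC a s t has hst := by
  refine Subtype.ext ?_
  rw [sup_val_of _ _ le_rfl has]
  show r (a ⊔ s, a ⊔ s, t ⊔ s) = (s, s, t)
  simp [r, sup_eq_left.mpr has, sup_eq_right.mpr has, inf_eq_left.mpr has, inf_eq_right.mpr has, sup_eq_left.mpr hst, sup_eq_right.mpr hst, inf_eq_left.mpr hst, inf_eq_right.mpr hst, sup_eq_left.mpr (has.trans hst), sup_eq_right.mpr (has.trans hst), inf_eq_left.mpr (has.trans hst), inf_eq_right.mpr (has.trans hst)]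

lemma id_e3s_dK : e3 a s has ⊔ dK a s has = dK a s has := by
  refine Subtype.ext ?_
  rw [sup_val_of _ _ le_rfl has]
  show r (a ⊔ s, a ⊔ s, s ⊔ s) = (s, s, s)
  simp [r, sup_eq_left.mpr has, sup_eq_right.mpr has, inf_eq_left.mpr has, inf_eq_right.mpr has]

lemma id_cB_e3 : cB a s t has hst ⊔ e3 a t (has.trans hst) = dK a t (has.trans hst) := by
  refine Subtype.ext ?_
  rw [sup_val_of _ _ has le_rfl]
  show r (s ⊔ a, t ⊔ a, s ⊔ t) = (t, t, t)
  simp [r, sup_eq_left.mpr has, sup_eq_right.mpr has, inf_eq_left.mpr has, inf_eq_right.mpr has, sup_eq_left.mpr hst, sup_eq_right.mpr hst, inf_eq_left.mpr hst, inf_eq_right.mpr hst, sup_eq_left.mpr (has.trans hst), sup_eq_right.mpr (has.trans hst), inf_eq_left.mpr (has.trans hst), inf_eq_right.mpr (has.trans hst)]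

lemma id_cC_e2 : cC a s t has hst ⊔ e2 a t (has.trans hst) = dK a t (has.trans hst) := by
  refine Subtype.ext ?_
  rw [sup_val_of _ _ has le_rfl]
  show r (s ⊔ a, s ⊔ t, t ⊔ a) = (t, t, t)
  simp [r, sup_eq_left.mpr has, sup_eq_right.mpr has, inf_eq_left.mpr has, inf_eq_right.mpr has, sup_eq_left.mpr hst, sup_eq_right.mpr hst, inf_eq_left.mpr hst, inf_eq_right.mpr hst, sup_eq_left.mpr (has.trans hst), sup_eq_right.mpr (has.trans hst), inf_eq_left.mpr (has.trans hst), inf_eq_right.mpr (has.trans hst)]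

lemma id_dK_fK : dK a t (has.trans hst) ⊓ fK a t = fK a t := by
  refine Subtype.ext ?_
  rw [inf_val]
  show (t ⊓ t, t ⊓ a, t ⊓ a) = (t, a, a)
  simp [r, sup_eq_left.mpr has, sup_eq_right.mpr has, inf_eq_left.mpr has, inf_eq_right.mpr has, sup_eq_left.mpr hst, sup_eq_right.mpr hst, inf_eq_left.mpr hst, inf_eq_right.mpr hst, sup_eq_left.mpr (has.trans hst), sup_eq_right.mpr (has.trans hst), inf_eq_left.mpr (has.trans hst), inf_eq_right.mpr (has.trans hst)]

lemma id_cC_fK : cC a s t has hst ⊓ fK a t = fK a s := by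
  refine Subtype.ext ?_
  rw [inf_val]
  show (s ⊓ t, s ⊓ a, t ⊓ a) = (s, a, a)
  simp [r, sup_eq_left.mpr has, sup_eq_right.mpr has, inf_eq_left.mpr has, inf_eq_right.mpr has, sup_eq_left.mpr hst, sup_eq_right.mpr hst, inf_eq_left.mpr hst, inf_eq_right.mpr hst, sup_eq_left.mpr (has.trans hst), sup_eq_right.mpr (has.trans hst), inf_eq_left.mpr (has.trans hst), inf_eq_right.mpr (has.trans hst)]

lemma id_cB_fK : cB a s t has hst ⊓ fK a t = fK a s := by
  refine Subtype.ext ?_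
  rw [inf_val]
  show (s ⊓ t, t ⊓ a, s ⊓ a) = (s, a, a)
  simp [r, sup_eq_left.mpr has, sup_eq_right.mpr has, inf_eq_left.mpr has, inf_eq_right.mpr has, sup_eq_left.mpr hst, sup_eq_right.mpr hst, inf_eq_left.mpr hst, inf_eq_right.mpr hst, sup_eq_left.mpr (has.trans hst), sup_eq_right.mpr (has.trans hst), inf_eq_left.mpr (has.trans hst), inf_eq_right.mpr (has.trans hst)]

lemma id_dK_e2i : dK a t (has.trans hst) ⊓ e2 a t (has.trans hst) = e2 a t (has.trans hst) := by
  refine Subtype.ext ?_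
  rw [inf_val]
  show (t ⊓ a, t ⊓ t, t ⊓ a) = (a, t, a)
  simp [r, sup_eq_left.mpr has, sup_eq_right.mpr has, inf_eq_left.mpr has, inf_eq_right.mpr has, sup_eq_left.mpr hst, sup_eq_right.mpr hst, inf_eq_left.mpr hst, inf_eq_right.mpr hst, sup_eq_left.mpr (has.trans hst), sup_eq_right.mpr (has.trans hst), inf_eq_left.mpr (has.trans hst), inf_eq_right.mpr (has.trans hst)]

lemma id_cC_e2i : cC a s t has hst ⊓ e2 a t (has.trans hst) = e2 a s has := by
  refine Subtype.ext ?_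
  rw [inf_val]
  show (s ⊓ a, s ⊓ t, t ⊓ a) = (a, s, a)
  simp [r, sup_eq_left.mpr has, sup_eq_right.mpr has, inf_eq_left.mpr has, inf_eq_right.mpr has, sup_eq_left.mpr hst, sup_eq_right.mpr hst, inf_eq_left.mpr hst, inf_eq_right.mpr hst, sup_eq_left.mpr (has.trans hst), sup_eq_right.mpr (has.trans hst), inf_eq_left.mpr (has.trans hst), inf_eq_right.mpr (has.trans hst)]

lemma id_dK_e3i : dK a t (has.trans hst) ⊓ e3 a t (has.trans hst) = e3 a t (has.trans hst) := by
  refine Subtype.ext ?_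
  rw [inf_val]
  show (t ⊓ a, t ⊓ a, t ⊓ t) = (a, a, t)
  simp [r, sup_eq_left.mpr has, sup_eq_right.mpr has, inf_eq_left.mpr has, inf_eq_right.mpr has, sup_eq_left.mpr hst, sup_eq_right.mpr hst, inf_eq_left.mpr hst, inf_eq_right.mpr hst, sup_eq_left.mpr (has.trans hst), sup_eq_right.mpr (has.trans hst), inf_eq_left.mpr (has.trans hst), inf_eq_right.mpr (has.trans hst)]

lemma id_cB_e3i : cB a s t has hst ⊓ e3 a t (has.trans hst) = e3 a s has := by
  refine Subtype.ext ?_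
  rw [inf_val]
  show (s ⊓ a, t ⊓ a, s ⊓ t) = (a, a, s)
  simp [r, sup_eq_left.mpr has, sup_eq_right.mpr has, inf_eq_left.mpr has, inf_eq_right.mpr has, sup_eq_left.mpr hst, sup_eq_right.mpr hst, inf_eq_left.mpr hst, inf_eq_right.mpr hst, sup_eq_left.mpr (has.trans hst), sup_eq_right.mpr (has.trans hst), inf_eq_left.mpr (has.trans hst), inf_eq_right.mpr (has.trans hst)]

end Identities

/-! ### Transfer lemmas between the three axes -/

section Transfer

variable {Φ : K a → K a → Prop} {s t : L}

/-- From axis 1 to axis 2. -/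
lemma T12 (hΦ : IsLatticeCongruence Φ) (has : a ≤ s) (hst : s ≤ t)
    (h : Φ (fK a t) (fK a s)) : Φ (e2 a t (has.trans hst)) (e2 a s has) := by
  have h1 : Φ (cA a s t has hst) (dK a s has) := by
    have hc := cong_sup hΦ (dK a s has) h
    rwa [id_fK_dK has hst, id_fKs_dK has] at hc
  have h2 : Φ (dK a t (has.trans hst)) (cC a s t has hst) := by
    have hc := cong_sup hΦ (e3 a t (has.trans hst)) h1
    rwa [id_cA_e3 has hst, id_dK_e3 has hst] at hc
  have hc := cong_inf hΦ (e2 a t (has.trans hst)) h2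
  rwa [id_dK_e2i has hst, id_cC_e2i has hst] at hc

/-- From axis 1 to axis 3. -/
lemma T13 (hΦ : IsLatticeCongruence Φ) (has : a ≤ s) (hst : s ≤ t)
    (h : Φ (fK a t) (fK a s)) : Φ (e3 a t (has.trans hst)) (e3 a s has) := by
  have h1 : Φ (cA a s t has hst) (dK a s has) := by
    have hc := cong_sup hΦ (dK a s has) h
    rwa [id_fK_dK has hst, id_fKs_dK has] at hc
  have h2 : Φ (dK a t (has.trans hst)) (cB a s t has hst) := by
    have hc := cong_sup hΦ (e2 a t (has.trans hst)) h1
    rwa [id_cA_e2 has hst, id_dK_e2 has hst] at hc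
  have hc := cong_inf hΦ (e3 a t (has.trans hst)) h2
  rwa [id_dK_e3i has hst, id_cB_e3i has hst] at hc

/-- From axis 2 back to axis 1. -/
lemma T21 (hΦ : IsLatticeCongruence Φ) (has : a ≤ s) (hst : s ≤ t)
    (h : Φ (e2 a t (has.trans hst)) (e2 a s has)) : Φ (fK a t) (fK a s) := by
  have h1 : Φ (cB a s t has hst) (dK a s has) := by
    have hc := cong_sup hΦ (dK a s has) h
    rwa [id_e2_dK has hst, id_e2s_dK has] at hc
  have h2 : Φ (dK a t (has.trans hst)) (cC a s t has hst) := by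
    have hc := cong_sup hΦ (e3 a t (has.trans hst)) h1
    rwa [id_cB_e3 has hst, id_dK_e3 has hst] at hc
  have hc := cong_inf hΦ (fK a t) h2
  rwa [id_dK_fK has hst, id_cC_fK has hst] at hc

/-- From axis 3 back to axis 1. -/
lemma T31 (hΦ : IsLatticeCongruence Φ) (has : a ≤ s) (hst : s ≤ t)
    (h : Φ (e3 a t (has.trans hst)) (e3 a s has)) : Φ (fK a t) (fK a s) := by
  have h1 : Φ (cC a s t has hst) (dK a s has) := by
    have hc := cong_sup hΦ (dK a s has) h
    rwa [id_e3_dK has hst, id_e3s_dK has] at hc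
  have h2 : Φ (dK a t (has.trans hst)) (cB a s t has hst) := by
    have hc := cong_sup hΦ (e2 a t (has.trans hst)) h1
    rwa [id_cC_e2 has hst, id_dK_e2 has hst] at hc
  have hc := cong_inf hΦ (fK a t) h2
  rwa [id_dK_fK has hst, id_cB_fK has hst] at hc

end Transfer


/-! ### N-map and decomposition -/

lemma N_val (u : K a) : (u ⊔ fK a a).val = (u.val.1 ⊔ a, u.val.2.1, u.val.2.2) := by
  rcases u.2 with h | h
  · rw [sup_val_pos u (fK a a)
      ⟨by show u.val.2.1 ⊔ a = a; rw [h.1]; exact sup_idem a,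
       by show u.val.2.2 ⊔ a = a; rw [h.2]; exact sup_idem a⟩]
    show (u.val.1 ⊔ a, a, a) = (u.val.1 ⊔ a, u.val.2.1, u.val.2.2)
    rw [h.1, h.2]
  · rw [sup_val_of u (fK a a) h.1 le_rfl]
    show r (u.val.1 ⊔ a, u.val.2.1 ⊔ a, u.val.2.2 ⊔ a) = (u.val.1 ⊔ a, u.val.2.1, u.val.2.2)
    rw [sup_eq_left.mpr h.1, sup_eq_left.mpr h.2.1, sup_eq_left.mpr h.2.2.1]
    exact r_eq_of_bal h.2.2.2

lemma decomp (u : K a) (h1 : a ≤ u.val.1) (hb : bal u.val) :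
    u = fK a u.val.1 ⊔ e2 a u.val.2.1 (y_ge u) ⊔ e3 a u.val.2.2 (z_ge u) := by
  have hw : (fK a u.val.1 ⊔ e2 a u.val.2.1 (y_ge u)).val
      = (u.val.1, u.val.2.1, u.val.1 ⊓ u.val.2.1) := by
    rw [sup_val_of (fK a u.val.1) (e2 a u.val.2.1 (y_ge u)) h1 le_rfl]
    show r (u.val.1 ⊔ a, a ⊔ u.val.2.1, a ⊔ a) = (u.val.1, u.val.2.1, u.val.1 ⊓ u.val.2.1)
    simp [r, sup_eq_left.mpr h1, sup_eq_right.mpr (y_ge u), sup_eq_left.mpr (y_ge u),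
      inf_eq_right.mpr (le_sup_left : u.val.1 ≤ u.val.1 ⊔ u.val.2.1),
      inf_eq_right.mpr (le_sup_right : u.val.2.1 ≤ u.val.1 ⊔ u.val.2.1)]
  have hwf : a ≤ (fK a u.val.1 ⊔ e2 a u.val.2.1 (y_ge u)).val.1 := by rw [hw]; exact h1
  refine Subtype.ext ?_
  rw [sup_val_of (fK a u.val.1 ⊔ e2 a u.val.2.1 (y_ge u)) (e3 a u.val.2.2 (z_ge u)) hwf le_rfl,
    hw]
  show u.val = r (u.val.1 ⊔ a, u.val.2.1 ⊔ a, (u.val.1 ⊓ u.val.2.1) ⊔ u.val.2.2)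
  rw [sup_eq_left.mpr h1, sup_eq_left.mpr (y_ge u)]
  have e1 : u.val.1 ⊔ ((u.val.1 ⊓ u.val.2.1) ⊔ u.val.2.2) = u.val.1 ⊔ u.val.2.2 := by
    rw [← sup_assoc, sup_inf_self]
  have e2' : u.val.2.1 ⊔ ((u.val.1 ⊓ u.val.2.1) ⊔ u.val.2.2) = u.val.2.1 ⊔ u.val.2.2 := by
    rw [← sup_assoc, inf_comm u.val.1 u.val.2.1, sup_inf_self]
  show u.val =
    ((u.val.1 ⊔ u.val.2.1) ⊓ (u.val.1 ⊔ ((u.val.1 ⊓ u.val.2.1) ⊔ u.val.2.2)),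
     (u.val.1 ⊔ u.val.2.1) ⊓ (u.val.2.1 ⊔ ((u.val.1 ⊓ u.val.2.1) ⊔ u.val.2.2)),
     (u.val.1 ⊔ ((u.val.1 ⊓ u.val.2.1) ⊔ u.val.2.2)) ⊓
       (u.val.2.1 ⊔ ((u.val.1 ⊓ u.val.2.1) ⊔ u.val.2.2)))
  rw [e1, e2', ← hb.1, ← hb.2.1, ← hb.2.2]

/-! ### The canonical extension of a congruence -/

def Phi (a : L) (Θ : L → L → Prop) (u v : K a) : Prop :=
  Θ u.val.1 v.val.1 ∧ Θ u.val.2.1 v.val.2.1 ∧ Θ u.val.2.2 v.val.2.2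

section CongruenceSection

variable {Θ : L → L → Prop}

lemma phi_equiv (hΘ : IsLatticeCongruence Θ) : Equivalence (Phi a Θ) :=
  ⟨fun u => ⟨hΘ.1.refl _, hΘ.1.refl _, hΘ.1.refl _⟩,
   fun h => ⟨hΘ.1.symm h.1, hΘ.1.symm h.2.1, hΘ.1.symm h.2.2⟩,
   fun h h' => ⟨hΘ.1.trans h.1 h'.1, hΘ.1.trans h.2.1 h'.2.1, hΘ.1.trans h.2.2 h'.2.2⟩⟩

lemma phi_symm (hΘ : IsLatticeCongruence Θ) {u v : K a} (h : Phi a Θ u v) : Phi a Θ v u :=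
  (phi_equiv hΘ).symm h

lemma key1 (hΘ : IsLatticeCongruence Θ) {b c : L} (hc : a ≤ c) (h : Θ b c) : Θ b (b ⊔ a) := by
  have h1 := (hΘ.2 b c a a h (hΘ.1.refl a)).1
  rw [sup_eq_left.mpr hc] at h1
  exact hΘ.1.trans h (hΘ.1.symm h1)

lemma first_ge_of_ne (w : K a) (hw : ¬(w.val.2.1 = a ∧ w.val.2.2 = a)) :
    a ≤ w.val.1 ∧ bal w.val := by
  rcases w.2 with h | h
  · exact absurd h hw
  · exact ⟨h.1, h.2.2.2⟩

lemma phi_sup_mixed (hΘ : IsLatticeCongruence Θ) {u₁ u₂ v₁ v₂ : K a}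
    (hu : Phi a Θ u₁ u₂) (hv : Phi a Θ v₁ v₂)
    (c₁ : u₁.val.2.1 ⊔ v₁.val.2.1 = a ∧ u₁.val.2.2 ⊔ v₁.val.2.2 = a)
    (c₂ : ¬(u₂.val.2.1 ⊔ v₂.val.2.1 = a ∧ u₂.val.2.2 ⊔ v₂.val.2.2 = a)) :
    Phi a Θ (u₁ ⊔ v₁) (u₂ ⊔ v₂) := by
  have hwit : a ≤ u₂.val.1 ∨ a ≤ v₂.val.1 := by
    by_cases h21 : u₂.val.2.1 = a
    · by_cases h22 : u₂.val.2.2 = a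
      · right
        rcases not_and_or.mp c₂ with hc | hc
        · have hne : v₂.val.2.1 ≠ a := fun hv' => hc (by rw [h21, hv']; exact sup_idem a)
          exact (first_ge_of_ne v₂ (fun hh => hne hh.1)).1
        · have hne : v₂.val.2.2 ≠ a := fun hv' => hc (by rw [h22, hv']; exact sup_idem a)
          exact (first_ge_of_ne v₂ (fun hh => hne hh.2)).1
      · left; exact (first_ge_of_ne u₂ (fun hh => h22 hh.2)).1
    · left; exact (first_ge_of_ne u₂ (fun hh => h21 hh.1)).1
  have hX : Θ (u₁.val.1 ⊔ v₁.val.1) ((u₁.val.1 ⊔ v₁.val.1) ⊔ a) := by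
    rcases hwit with hw | hw
    · have k := key1 hΘ hw hu.1
      have k2 := (hΘ.2 _ _ _ _ k (hΘ.1.refl v₁.val.1)).1
      rwa [sup_right_comm] at k2
    · have k := key1 hΘ hw hv.1
      have k2 := (hΘ.2 _ _ _ _ (hΘ.1.refl u₁.val.1) k).1
      rwa [← sup_assoc] at k2
  have hA : Θ (u₁.val.1 ⊔ v₁.val.1) (u₂.val.1 ⊔ v₂.val.1) := (hΘ.2 _ _ _ _ hu.1 hv.1).1
  have hB : Θ a (u₂.val.2.1 ⊔ v₂.val.2.1) := by
    have k := (hΘ.2 _ _ _ _ hu.2.1 hv.2.1).1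
    rwa [c₁.1] at k
  have hC : Θ a (u₂.val.2.2 ⊔ v₂.val.2.2) := by
    have k := (hΘ.2 _ _ _ _ hu.2.2 hv.2.2).1
    rwa [c₁.2] at k
  have t1 := (hΘ.2 _ _ _ _ hA hB).1
  have t2 := (hΘ.2 _ _ _ _ hA hC).1
  have t5 : Θ a ((u₂.val.2.1 ⊔ v₂.val.2.1) ⊔ (u₂.val.2.2 ⊔ v₂.val.2.2)) := by
    have k := (hΘ.2 _ _ _ _ hB hC).1
    rwa [sup_idem a] at k
  have hval1 := sup_val_pos _ _ c₁
  have hval2 := sup_val_neg _ _ c₂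
  refine ⟨?_, ?_, ?_⟩ <;> rw [hval1, hval2]
  · have t3 := (hΘ.2 _ _ _ _ t1 t2).2
    rw [inf_idem] at t3
    exact hΘ.1.trans hX t3
  · have t6 := (hΘ.2 _ _ _ _ t1 t5).2
    rwa [inf_eq_right.mpr le_sup_right] at t6
  · have t7 := (hΘ.2 _ _ _ _ t2 t5).2
    rwa [inf_eq_right.mpr le_sup_right] at t7

lemma phi_cong (hΘ : IsLatticeCongruence Θ) : IsLatticeCongruence (Phi a Θ) := by
  refine ⟨phi_equiv hΘ, ?_⟩
  intro u₁ u₂ v₁ v₂ h h'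
  constructor
  · by_cases c₁ : u₁.val.2.1 ⊔ v₁.val.2.1 = a ∧ u₁.val.2.2 ⊔ v₁.val.2.2 = a <;>
      by_cases c₂ : u₂.val.2.1 ⊔ v₂.val.2.1 = a ∧ u₂.val.2.2 ⊔ v₂.val.2.2 = a
    · have hval1 := sup_val_pos _ _ c₁
      have hval2 := sup_val_pos _ _ c₂
      refine ⟨?_, ?_, ?_⟩ <;> rw [hval1, hval2]
      · exact (hΘ.2 _ _ _ _ h.1 h'.1).1
      · exact hΘ.1.refl a
      · exact hΘ.1.refl a
    · exact phi_sup_mixed hΘ h h' c₁ c₂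
    · exact phi_symm hΘ (phi_sup_mixed hΘ (phi_symm hΘ h) (phi_symm hΘ h') c₂ c₁)
    · have hval1 := sup_val_neg _ _ c₁
      have hval2 := sup_val_neg _ _ c₂
      have hA := (hΘ.2 _ _ _ _ h.1 h'.1).1
      have hB := (hΘ.2 _ _ _ _ h.2.1 h'.2.1).1
      have hC := (hΘ.2 _ _ _ _ h.2.2 h'.2.2).1
      refine ⟨?_, ?_, ?_⟩ <;> rw [hval1, hval2]
      · exact (hΘ.2 _ _ _ _ (hΘ.2 _ _ _ _ hA hB).1 (hΘ.2 _ _ _ _ hA hC).1).2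
      · exact (hΘ.2 _ _ _ _ (hΘ.2 _ _ _ _ hA hB).1 (hΘ.2 _ _ _ _ hB hC).1).2
      · exact (hΘ.2 _ _ _ _ (hΘ.2 _ _ _ _ hA hC).1 (hΘ.2 _ _ _ _ hB hC).1).2
  · exact ⟨(hΘ.2 _ _ _ _ h.1 h'.1).2, (hΘ.2 _ _ _ _ h.2.1 h'.2.1).2,
      (hΘ.2 _ _ _ _ h.2.2 h'.2.2).2⟩

lemma phi_restrict (hΘ : IsLatticeCongruence Θ) {p q : L} :
    Phi a Θ (fK a p) (fK a q) ↔ Θ p q :=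
  ⟨fun h => h.1, fun h => ⟨h, hΘ.1.refl a, hΘ.1.refl a⟩⟩

/-! ### Uniqueness: any congruence restricting to `Θ` equals `Phi a Θ` -/

variable {Φ : K a → K a → Prop}

lemma core_sub (hΘ : IsLatticeCongruence Θ) (hΦ : IsLatticeCongruence Φ)
    (hres : ∀ p q : L, Φ (fK a p) (fK a q) ↔ Θ p q) {u v : K a}
    (hu1 : a ≤ u.val.1) (hbu : bal u.val) (hv1 : a ≤ v.val.1) (hbv : bal v.val)
    (h : Phi a Θ u v) : Φ u v := by
  have p1 : Φ (fK a u.val.1) (fK a v.val.1) := (hres _ _).mpr h.1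
  have p2 : Φ (e2 a u.val.2.1 (y_ge u)) (e2 a v.val.2.1 (y_ge v)) := by
    have hyu : Θ u.val.2.1 (u.val.2.1 ⊔ v.val.2.1) := by
      have k := (hΘ.2 _ _ _ _ (hΘ.1.refl u.val.2.1) h.2.1).1
      rwa [sup_idem u.val.2.1] at k
    have hyv : Θ v.val.2.1 (u.val.2.1 ⊔ v.val.2.1) := by
      have k := (hΘ.2 _ _ _ _ h.2.1 (hΘ.1.refl v.val.2.1)).1
      rw [sup_idem v.val.2.1] at k
      exact hΘ.1.symm k
    have q1 := T12 hΦ (y_ge u) (le_sup_left : u.val.2.1 ≤ u.val.2.1 ⊔ v.val.2.1)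
      ((hres _ _).mpr (hΘ.1.symm hyu))
    have q2 := T12 hΦ (y_ge v) (le_sup_right : v.val.2.1 ≤ u.val.2.1 ⊔ v.val.2.1)
      ((hres _ _).mpr (hΘ.1.symm hyv))
    exact hΦ.1.trans (hΦ.1.symm q1) q2
  have p3 : Φ (e3 a u.val.2.2 (z_ge u)) (e3 a v.val.2.2 (z_ge v)) := by
    have hyu : Θ u.val.2.2 (u.val.2.2 ⊔ v.val.2.2) := by
      have k := (hΘ.2 _ _ _ _ (hΘ.1.refl u.val.2.2) h.2.2).1
      rwa [sup_idem u.val.2.2] at k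
    have hyv : Θ v.val.2.2 (u.val.2.2 ⊔ v.val.2.2) := by
      have k := (hΘ.2 _ _ _ _ h.2.2 (hΘ.1.refl v.val.2.2)).1
      rw [sup_idem v.val.2.2] at k
      exact hΘ.1.symm k
    have q1 := T13 hΦ (z_ge u) (le_sup_left : u.val.2.2 ≤ u.val.2.2 ⊔ v.val.2.2)
      ((hres _ _).mpr (hΘ.1.symm hyu))
    have q2 := T13 hΦ (z_ge v) (le_sup_right : v.val.2.2 ≤ u.val.2.2 ⊔ v.val.2.2)
      ((hres _ _).mpr (hΘ.1.symm hyv))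
    exact hΦ.1.trans (hΦ.1.symm q1) q2
  rw [decomp u hu1 hbu, decomp v hv1 hbv]
  exact (hΦ.2 _ _ _ _ (hΦ.2 _ _ _ _ p1 p2).1 p3).1

lemma mixed_sub (hΘ : IsLatticeCongruence Θ) (hΦ : IsLatticeCongruence Φ)
    (hres : ∀ p q : L, Φ (fK a p) (fK a q) ↔ Θ p q) {u v : K a}
    (hu : u.val.2.1 = a ∧ u.val.2.2 = a) (hv1 : a ≤ v.val.1) (hbv : bal v.val)
    (h : Phi a Θ u v) : Φ u v := by
  have hufx : u = fK a u.val.1 := by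
    refine Subtype.ext ?_
    have he : (u.val.1, a, a) = (u.val.1, u.val.2.1, u.val.2.2) := by rw [hu.1, hu.2]
    exact he.symm
  have h1 : Θ u.val.1 (u.val.1 ⊔ a) := key1 hΘ hv1 h.1
  have hstep : Φ u (fK a (u.val.1 ⊔ a)) := by
    rw [hufx]; exact (hres _ _).mpr h1
  have h2 : Phi a Θ (fK a (u.val.1 ⊔ a)) v := by
    refine ⟨?_, ?_, ?_⟩
    · have k := (hΘ.2 _ _ _ _ h.1 (hΘ.1.refl a)).1
      rwa [sup_eq_left.mpr hv1] at k
    · have k := h.2.1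
      rw [hu.1] at k
      exact k
    · have k := h.2.2
      rw [hu.2] at k
      exact k
  exact hΦ.1.trans hstep
    (core_sub hΘ hΦ hres le_sup_right (bal_tss le_sup_right) hv1 hbv h2)

lemma phi_le (hΘ : IsLatticeCongruence Θ) (hΦ : IsLatticeCongruence Φ)
    (hres : ∀ p q : L, Φ (fK a p) (fK a q) ↔ Θ p q) {u v : K a}
    (h : Phi a Θ u v) : Φ u v := by
  rcases u.2 with hu | hu
  · rcases v.2 with hv | hv
    · have hufx : u = fK a u.val.1 := by
        refine Subtype.ext ?_
        have he : (u.val.1, a, a) = (u.val.1, u.val.2.1, u.val.2.2) := by rw [hu.1, hu.2]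
        exact he.symm
      have hvfx : v = fK a v.val.1 := by
        refine Subtype.ext ?_
        have he : (v.val.1, a, a) = (v.val.1, v.val.2.1, v.val.2.2) := by rw [hv.1, hv.2]
        exact he.symm
      rw [hufx, hvfx]
      exact (hres _ _).mpr h.1
    · exact mixed_sub hΘ hΦ hres hu hv.1 hv.2.2.2 h
  · rcases v.2 with hv | hv
    · exact hΦ.1.symm (mixed_sub hΘ hΦ hres hv hu.1 hu.2.2.2 (phi_symm hΘ h))
    · exact core_sub hΘ hΦ hres hu.1 hu.2.2.2 hv.1 hv.2.2.2 h

lemma le_phi (hΘ : IsLatticeCongruence Θ) (hΦ : IsLatticeCongruence Φ)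
    (hres : ∀ p q : L, Φ (fK a p) (fK a q) ↔ Θ p q) {u v : K a}
    (h : Φ u v) : Phi a Θ u v := by
  refine ⟨?_, ?_, ?_⟩
  · have hc := cong_inf hΦ (fK a (u.val.1 ⊔ v.val.1)) h
    have e1 : u ⊓ fK a (u.val.1 ⊔ v.val.1) = fK a u.val.1 := by
      refine Subtype.ext ?_
      rw [inf_val]
      show (u.val.1 ⊓ (u.val.1 ⊔ v.val.1), u.val.2.1 ⊓ a, u.val.2.2 ⊓ a) = (u.val.1, a, a)
      simp [inf_eq_left.mpr (le_sup_left : u.val.1 ≤ u.val.1 ⊔ v.val.1),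
        inf_eq_right.mpr (y_ge u), inf_eq_right.mpr (z_ge u)]
    have e2' : v ⊓ fK a (u.val.1 ⊔ v.val.1) = fK a v.val.1 := by
      refine Subtype.ext ?_
      rw [inf_val]
      show (v.val.1 ⊓ (u.val.1 ⊔ v.val.1), v.val.2.1 ⊓ a, v.val.2.2 ⊓ a) = (v.val.1, a, a)
      simp [inf_eq_left.mpr (le_sup_right : v.val.1 ≤ u.val.1 ⊔ v.val.1),
        inf_eq_right.mpr (y_ge v), inf_eq_right.mpr (z_ge v)]
    rw [e1, e2'] at hc
    exact (hres _ _).mp hc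
  · have hN := cong_sup hΦ (fK a a) h
    have hYu : a ≤ u.val.2.1 ⊔ v.val.2.1 := (y_ge u).trans le_sup_left
    have hmu : (u ⊔ fK a a) ⊓ e2 a (u.val.2.1 ⊔ v.val.2.1) hYu = e2 a u.val.2.1 (y_ge u) := by
      refine Subtype.ext ?_
      rw [inf_val, N_val]
      show ((u.val.1 ⊔ a) ⊓ a, u.val.2.1 ⊓ (u.val.2.1 ⊔ v.val.2.1), u.val.2.2 ⊓ a)
        = (a, u.val.2.1, a)
      simp [inf_eq_right.mpr (le_sup_right : a ≤ u.val.1 ⊔ a),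
        inf_eq_left.mpr (le_sup_left : u.val.2.1 ≤ u.val.2.1 ⊔ v.val.2.1),
        inf_eq_right.mpr (z_ge u)]
    have hmv : (v ⊔ fK a a) ⊓ e2 a (u.val.2.1 ⊔ v.val.2.1) hYu = e2 a v.val.2.1 (y_ge v) := by
      refine Subtype.ext ?_
      rw [inf_val, N_val]
      show ((v.val.1 ⊔ a) ⊓ a, v.val.2.1 ⊓ (u.val.2.1 ⊔ v.val.2.1), v.val.2.2 ⊓ a)
        = (a, v.val.2.1, a)
      simp [inf_eq_right.mpr (le_sup_right : a ≤ v.val.1 ⊔ a),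
        inf_eq_left.mpr (le_sup_right : v.val.2.1 ≤ u.val.2.1 ⊔ v.val.2.1),
        inf_eq_right.mpr (z_ge v)]
    have hc := cong_inf hΦ (e2 a (u.val.2.1 ⊔ v.val.2.1) hYu) hN
    rw [hmu, hmv] at hc
    have hsv : Φ (e2 a (u.val.2.1 ⊔ v.val.2.1) hYu) (e2 a v.val.2.1 (y_ge v)) := by
      have hj := cong_sup hΦ (e2 a v.val.2.1 (y_ge v)) hc
      have euv : e2 a u.val.2.1 (y_ge u) ⊔ e2 a v.val.2.1 (y_ge v)
          = e2 a (u.val.2.1 ⊔ v.val.2.1) hYu := by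
        refine Subtype.ext ?_
        rw [sup_val_of _ _ le_rfl le_rfl]
        show r (a ⊔ a, u.val.2.1 ⊔ v.val.2.1, a ⊔ a) = (a, u.val.2.1 ⊔ v.val.2.1, a)
        simp [r, sup_eq_right.mpr hYu, sup_eq_left.mpr hYu, inf_eq_left.mpr hYu,
          inf_eq_right.mpr hYu]
      have evv := sup_idem (e2 a v.val.2.1 (y_ge v))
      rwa [euv, evv] at hj
    have hsu : Φ (e2 a (u.val.2.1 ⊔ v.val.2.1) hYu) (e2 a u.val.2.1 (y_ge u)) := by
      have hj := cong_sup hΦ (e2 a u.val.2.1 (y_ge u)) (hΦ.1.symm hc)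
      have evu : e2 a v.val.2.1 (y_ge v) ⊔ e2 a u.val.2.1 (y_ge u)
          = e2 a (u.val.2.1 ⊔ v.val.2.1) hYu := by
        refine Subtype.ext ?_
        rw [sup_val_of _ _ le_rfl le_rfl]
        show r (a ⊔ a, v.val.2.1 ⊔ u.val.2.1, a ⊔ a) = (a, u.val.2.1 ⊔ v.val.2.1, a)
        rw [sup_comm v.val.2.1 u.val.2.1]
        simp [r, sup_eq_right.mpr hYu, sup_eq_left.mpr hYu, inf_eq_left.mpr hYu,
          inf_eq_right.mpr hYu]
      have euu := sup_idem (e2 a u.val.2.1 (y_ge u))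
      rwa [evu, euu] at hj
    have r1 : Θ (u.val.2.1 ⊔ v.val.2.1) u.val.2.1 :=
      (hres _ _).mp (T21 hΦ (y_ge u) (le_sup_left : u.val.2.1 ≤ u.val.2.1 ⊔ v.val.2.1) hsu)
    have r2 : Θ (u.val.2.1 ⊔ v.val.2.1) v.val.2.1 :=
      (hres _ _).mp (T21 hΦ (y_ge v) (le_sup_right : v.val.2.1 ≤ u.val.2.1 ⊔ v.val.2.1) hsv)
    exact hΘ.1.trans (hΘ.1.symm r1) r2
  · have hN := cong_sup hΦ (fK a a) h
    have hYu : a ≤ u.val.2.2 ⊔ v.val.2.2 := (z_ge u).trans le_sup_left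
    have hmu : (u ⊔ fK a a) ⊓ e3 a (u.val.2.2 ⊔ v.val.2.2) hYu = e3 a u.val.2.2 (z_ge u) := by
      refine Subtype.ext ?_
      rw [inf_val, N_val]
      show ((u.val.1 ⊔ a) ⊓ a, u.val.2.1 ⊓ a, u.val.2.2 ⊓ (u.val.2.2 ⊔ v.val.2.2))
        = (a, a, u.val.2.2)
      simp [inf_eq_right.mpr (le_sup_right : a ≤ u.val.1 ⊔ a),
        inf_eq_left.mpr (le_sup_left : u.val.2.2 ≤ u.val.2.2 ⊔ v.val.2.2),
        inf_eq_right.mpr (y_ge u)]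
    have hmv : (v ⊔ fK a a) ⊓ e3 a (u.val.2.2 ⊔ v.val.2.2) hYu = e3 a v.val.2.2 (z_ge v) := by
      refine Subtype.ext ?_
      rw [inf_val, N_val]
      show ((v.val.1 ⊔ a) ⊓ a, v.val.2.1 ⊓ a, v.val.2.2 ⊓ (u.val.2.2 ⊔ v.val.2.2))
        = (a, a, v.val.2.2)
      simp [inf_eq_right.mpr (le_sup_right : a ≤ v.val.1 ⊔ a),
        inf_eq_left.mpr (le_sup_right : v.val.2.2 ≤ u.val.2.2 ⊔ v.val.2.2),
        inf_eq_right.mpr (y_ge v)]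
    have hc := cong_inf hΦ (e3 a (u.val.2.2 ⊔ v.val.2.2) hYu) hN
    rw [hmu, hmv] at hc
    have hsv : Φ (e3 a (u.val.2.2 ⊔ v.val.2.2) hYu) (e3 a v.val.2.2 (z_ge v)) := by
      have hj := cong_sup hΦ (e3 a v.val.2.2 (z_ge v)) hc
      have euv : e3 a u.val.2.2 (z_ge u) ⊔ e3 a v.val.2.2 (z_ge v)
          = e3 a (u.val.2.2 ⊔ v.val.2.2) hYu := by
        refine Subtype.ext ?_
        rw [sup_val_of _ _ le_rfl le_rfl]
        show r (a ⊔ a, a ⊔ a, u.val.2.2 ⊔ v.val.2.2) = (a, a, u.val.2.2 ⊔ v.val.2.2)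
        simp [r, sup_eq_right.mpr hYu, sup_eq_left.mpr hYu, inf_eq_left.mpr hYu,
          inf_eq_right.mpr hYu]
      have evv := sup_idem (e3 a v.val.2.2 (z_ge v))
      rwa [euv, evv] at hj
    have hsu : Φ (e3 a (u.val.2.2 ⊔ v.val.2.2) hYu) (e3 a u.val.2.2 (z_ge u)) := by
      have hj := cong_sup hΦ (e3 a u.val.2.2 (z_ge u)) (hΦ.1.symm hc)
      have evu : e3 a v.val.2.2 (z_ge v) ⊔ e3 a u.val.2.2 (z_ge u)
          = e3 a (u.val.2.2 ⊔ v.val.2.2) hYu := by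
        refine Subtype.ext ?_
        rw [sup_val_of _ _ le_rfl le_rfl]
        show r (a ⊔ a, a ⊔ a, v.val.2.2 ⊔ u.val.2.2) = (a, a, u.val.2.2 ⊔ v.val.2.2)
        rw [sup_comm v.val.2.2 u.val.2.2]
        simp [r, sup_eq_right.mpr hYu, sup_eq_left.mpr hYu, inf_eq_left.mpr hYu,
          inf_eq_right.mpr hYu]
      have euu := sup_idem (e3 a u.val.2.2 (z_ge u))
      rwa [evu, euu] at hj
    have r1 : Θ (u.val.2.2 ⊔ v.val.2.2) u.val.2.2 :=
      (hres _ _).mp (T31 hΦ (z_ge u) (le_sup_left : u.val.2.2 ≤ u.val.2.2 ⊔ v.val.2.2) hsu)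
    have r2 : Θ (u.val.2.2 ⊔ v.val.2.2) v.val.2.2 :=
      (hres _ _).mp (T31 hΦ (z_ge v) (le_sup_right : v.val.2.2 ≤ u.val.2.2 ⊔ v.val.2.2) hsv)
    exact hΘ.1.trans (hΘ.1.symm r1) r2

end CongruenceSection

end GlueExt

/-- Every lattice with more than one element has a proper congruence-preserving
extension in which it is an ideal: the image of the embedding is a nonempty
downward-closed subset closed under binary joins. -/
theorem proper_congruence_preserving_extension_as_ideal
    (L : Type u) [Lattice L] [Nontrivial L] :
    ∃ (K : Type u) (_ : Lattice K) (f : L → K),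
      Function.Injective f ∧
      (∀ x y : L, f (x ⊔ y) = f x ⊔ f y) ∧
      (∀ x y : L, f (x ⊓ y) = f x ⊓ f y) ∧
      ¬ Function.Surjective f ∧
      (∀ Θ : L → L → Prop, IsLatticeCongruence Θ →
        ∃! Φ : K → K → Prop,
          IsLatticeCongruence Φ ∧ ∀ x y : L, Φ (f x) (f y) ↔ Θ x y) ∧
      (Set.range f).Nonempty ∧
      IsLowerSet (Set.range f) ∧
      ∀ a ∈ Set.range f, ∀ b ∈ Set.range f, a ⊔ b ∈ Set.range f := by
  obtain ⟨x0, y0, hxy⟩ := exists_pair_ne L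
  have hab : x0 ⊓ y0 ≤ x0 ⊔ y0 := inf_le_left.trans le_sup_left
  have hne : x0 ⊓ y0 ≠ x0 ⊔ y0 := by
    intro h
    apply hxy
    have h1 : x0 ≤ y0 :=
      calc x0 ≤ x0 ⊔ y0 := le_sup_left
        _ = x0 ⊓ y0 := h.symm
        _ ≤ y0 := inf_le_right
    have h2 : y0 ≤ x0 :=
      calc y0 ≤ x0 ⊔ y0 := le_sup_right
        _ = x0 ⊓ y0 := h.symm
        _ ≤ x0 := inf_le_left
    exact le_antisymm h1 h2
  refine ⟨GlueExt.K (x0 ⊓ y0), inferInstance, GlueExt.fK (x0 ⊓ y0),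
    GlueExt.fK_inj, fun p q => GlueExt.fK_sup p q, fun p q => GlueExt.fK_inf p q,
    ?_, ?_, ?_, ?_, ?_⟩
  · -- not surjective
    intro hs
    obtain ⟨p, hp⟩ := hs (GlueExt.dK (x0 ⊓ y0) (x0 ⊔ y0) hab)
    exact hne (congrArg (fun w : GlueExt.K (x0 ⊓ y0) => w.val.2.1) hp)
  · -- congruence-preserving
    intro Θ hΘ
    refine ⟨GlueExt.Phi (x0 ⊓ y0) Θ,
      ⟨GlueExt.phi_cong hΘ, fun p q => GlueExt.phi_restrict hΘ⟩, ?_⟩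
    intro Φ hΦ
    funext u v
    exact propext ⟨GlueExt.le_phi hΘ hΦ.1 (fun p q => hΦ.2 p q),
      GlueExt.phi_le hΘ hΦ.1 (fun p q => hΦ.2 p q)⟩
  · -- nonempty range
    exact ⟨GlueExt.fK (x0 ⊓ y0) (x0 ⊓ y0), ⟨x0 ⊓ y0, rfl⟩⟩
  · -- lower set
    intro w1 w2 hle hw1
    obtain ⟨p, rfl⟩ := hw1
    refine ⟨w2.val.1, ?_⟩
    refine Subtype.ext ?_
    have h21 : w2.val.2.1 = x0 ⊓ y0 := le_antisymm hle.2.1 (GlueExt.y_ge w2)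
    have h22 : w2.val.2.2 = x0 ⊓ y0 := le_antisymm hle.2.2 (GlueExt.z_ge w2)
    have he : (w2.val.1, x0 ⊓ y0, x0 ⊓ y0) = (w2.val.1, w2.val.2.1, w2.val.2.2) := by
      rw [h21, h22]
    exact he
  · -- join-closed
    rintro w1 ⟨p, rfl⟩ w2 ⟨q, rfl⟩
    exact ⟨p ⊔ q, GlueExt.fK_sup p q⟩
end
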